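/- arXiv:1612.05717 — 7 statements merged into one kernel-verified Lean document; each statement's English description precedes it below -/
import Mathlib

section
/- For any finite set S of points in F^d, there exists a nonzero polynomial Q in F[x_1,...,x_d] of degree at most C(d) * |S|^(1/d) vanishing at every point of S. -/
open MvPolynomial

private lemma aux_poly (F : Type) [Field F] (d k : ℕ) (S : Finset (Fin d → F))
    (hcard : S.card < (k + 1) ^ d) :
    ∃ Q : MvPolynomial (Fin d) F, Q ≠ 0 ∧ Q.totalDegree ≤ d * k ∧
      ∀ x ∈ S, MvPolynomial.eval x Q = 0 := by
  classical
  let e : (Fin d → Fin (k+1)) → (Fin d →₀ ℕ) :=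
    fun m => Finsupp.equivFunOnFinite.symm (fun i => (m i : ℕ))
  have he : Function.Injective e := by
    intro a b hab
    have h2 : (fun i => ((a i : ℕ))) = fun i => ((b i : ℕ)) :=
      Finsupp.equivFunOnFinite.symm.injective hab
    funext i
    exact Fin.ext (congrFun h2 i)
  let P : ((Fin d → Fin (k+1)) → F) →ₗ[F] MvPolynomial (Fin d) F :=
    { toFun := fun c => ∑ m, MvPolynomial.monomial (e m) (c m)
      map_add' := by intro a b; simp [Finset.sum_add_distrib]
      map_smul' := by
        intro r a
        simp [Finset.smul_sum, MvPolynomial.smul_monomial, smul_eq_mul] }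
  let Φ : ((Fin d → Fin (k+1)) → F) →ₗ[F] ((↥S) → F) :=
    (LinearMap.pi fun s : S => (MvPolynomial.aeval (s : Fin d → F)).toLinearMap).comp P
  have hker : ∃ v : (Fin d → Fin (k+1)) → F, v ≠ 0 ∧ Φ v = 0 := by
    have hinj : ¬ Function.Injective Φ := by
      intro hinj
      have hle := LinearMap.finrank_le_finrank_of_injective hinj
      rw [Module.finrank_fintype_fun_eq_card, Module.finrank_fintype_fun_eq_card] at hle
      rw [Fintype.card_fun, Fintype.card_coe, Fintype.card_fin, Fintype.card_fin] at hle
      omega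
    rw [← LinearMap.ker_eq_bot, Submodule.eq_bot_iff] at hinj
    push_neg at hinj
    obtain ⟨v, hv1, hv2⟩ := hinj
    exact ⟨v, hv2, hv1⟩
  obtain ⟨v, hv0, hvker⟩ := hker
  refine ⟨P v, ?_, ?_, ?_⟩
  · obtain ⟨m₀, hm₀⟩ := Function.ne_iff.mp hv0
    intro hQ
    apply hm₀
    have hc : MvPolynomial.coeff (e m₀) (P v) = v m₀ := by
      show MvPolynomial.coeff (e m₀) (∑ m, MvPolynomial.monomial (e m) (v m)) = v m₀
      rw [MvPolynomial.coeff_sum]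
      rw [Finset.sum_eq_single m₀]
      · simp [MvPolynomial.coeff_monomial]
      · intro b _ hb
        simp [MvPolynomial.coeff_monomial, he.ne hb]
      · simp
    rw [hQ] at hc
    simpa using hc.symm
  · refine le_trans (MvPolynomial.totalDegree_finset_sum _ _) ?_
    refine Finset.sup_le fun m _ => ?_
    refine le_trans (MvPolynomial.totalDegree_monomial_le _ _) ?_
    rw [Finsupp.sum_fintype _ _ (fun _ => rfl)]
    calc (∑ i : Fin d, ((m i : ℕ))) ≤ ∑ _i : Fin d, k :=
          Finset.sum_le_sum fun i _ => Nat.lt_succ_iff.mp (m i).isLt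
      _ = d * k := by simp [Finset.sum_const, mul_comm]
  · intro p hp
    have hz := congrFun hvker ⟨p, hp⟩
    have h0 : MvPolynomial.aeval p (P v) = 0 := hz
    calc MvPolynomial.eval p (P v)
        = RingHomClass.toRingHom (MvPolynomial.aeval (R := F) p) (P v) := by
          rw [MvPolynomial.coe_aeval_eq_eval]
      _ = MvPolynomial.aeval p (P v) := rfl
      _ = 0 := h0

/-- For any finite set `S` of points in `F^d` there is a nonzero polynomial of
degree at most `C(d) * |S|^(1/d)` vanishing at every point of `S`. -/
theorem stmt1 (d : ℕ) (hd : 1 ≤ d) :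
    ∃ C : ℝ, 0 < C ∧
      ∀ (F : Type) [Field F] (S : Finset (Fin d → F)),
        ∃ Q : MvPolynomial (Fin d) F, Q ≠ 0 ∧
          (Q.totalDegree : ℝ) ≤ C * (S.card : ℝ) ^ ((1 : ℝ) / (d : ℝ)) ∧
          ∀ x ∈ S, MvPolynomial.eval x Q = 0 := by
  have hd0 : (0:ℝ) < d := by exact_mod_cast hd
  refine ⟨2 * d, by positivity, ?_⟩
  intro F _ S
  have hx0 : (0:ℝ) ≤ (S.card : ℝ) ^ ((1:ℝ)/(d:ℝ)) := Real.rpow_nonneg (by positivity) _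
  obtain ⟨k, hkx, hcard⟩ : ∃ k : ℕ, (k:ℝ) ≤ 2 * (S.card : ℝ) ^ ((1:ℝ)/(d:ℝ)) ∧
      S.card < (k+1)^d := by
    refine ⟨⌈(S.card : ℝ) ^ ((1:ℝ)/(d:ℝ))⌉₊, ?_, ?_⟩
    · rcases Nat.eq_zero_or_pos S.card with h0 | h1
      · rw [h0]
        rw [Nat.cast_zero, Real.zero_rpow (by positivity : (1:ℝ)/(d:ℝ) ≠ 0)]
        simp
      · have hx1 : (1:ℝ) ≤ (S.card : ℝ) ^ ((1:ℝ)/(d:ℝ)) :=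
          Real.one_le_rpow (by exact_mod_cast h1) (by positivity)
        have hc := Nat.ceil_lt_add_one hx0
        linarith
    · have h1 : ((S.card : ℝ)) = ((S.card : ℝ) ^ ((1:ℝ)/(d:ℝ))) ^ (d:ℕ) := by
        rw [← Real.rpow_natCast ((S.card:ℝ) ^ ((1:ℝ)/(d:ℝ))) d,
          ← Real.rpow_mul (by positivity), one_div, inv_mul_cancel₀ (by positivity)]
        simp
      have h2 : ((S.card : ℝ) ^ ((1:ℝ)/(d:ℝ))) ^ (d:ℕ)
          ≤ ((⌈(S.card : ℝ) ^ ((1:ℝ)/(d:ℝ))⌉₊ : ℕ):ℝ) ^ (d:ℕ) :=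
        pow_le_pow_left₀ hx0 (Nat.le_ceil _) d
      have h4 : S.card ≤ (⌈(S.card : ℝ) ^ ((1:ℝ)/(d:ℝ))⌉₊ : ℕ) ^ d := by
        exact_mod_cast h1.le.trans h2
      exact lt_of_le_of_lt h4 (Nat.pow_lt_pow_left (by omega) (by omega))
  obtain ⟨Q, hQ0, hQdeg, hQv⟩ := aux_poly F d k S hcard
  refine ⟨Q, hQ0, ?_, hQv⟩
  calc (Q.totalDegree : ℝ) ≤ ((d * k : ℕ) : ℝ) := by exact_mod_cast hQdeg
    _ = (d:ℝ) * k := by push_cast; ring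
    _ ≤ (d:ℝ) * (2 * (S.card : ℝ) ^ ((1:ℝ)/(d:ℝ))) :=
        mul_le_mul_of_nonneg_left hkx (by positivity)
    _ = 2 * d * (S.card : ℝ) ^ ((1:ℝ)/(d:ℝ)) := by ring
end

section
/- Let Q be a nonzero polynomial in d variables over a field F, written Q = Σ_α x_1^{α_1} ··· x_{d-1}^{α_{d-1}} f_α(x_d), where α ranges over (d-1)-tuples of nonnegative integers. Let α_0 be a tuple with f_{α_0} ≠ 0 and |α_0| = α_{0,1}+···+α_{0,d-1} minimal among all α with f_α ≠ 0. For each p ∈ F, let m(p) denote the minimum over all such minimal-|α| tuples α of the multiplicity of p as a root of f_α. Then Σ_{p ∈ F} m(p) ≤ deg Q. -/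
open MvPolynomial

/-- Writing `Q = ∑_α x^(α,0) f_α(x_d)`, `sliceAt Q α` is the one-variable
polynomial `f_α`. -/
noncomputable def sliceAt {F : Type} [Field F] {n : ℕ}
    (Q : MvPolynomial (Fin (n + 1)) F) (α : Fin n → ℕ) : Polynomial F :=
  ∑ k ∈ Finset.range (Q.totalDegree + 1),
    Polynomial.C (MvPolynomial.coeff (Finsupp.equivFunOnFinite.symm (Fin.snoc α k)) Q) *
      Polynomial.X ^ k

/-- `α` is lowest: `f_α ≠ 0` with `|α|` minimal among tuples with `f_α ≠ 0`. -/
def IsLowest {F : Type} [Field F] {n : ℕ}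
    (Q : MvPolynomial (Fin (n + 1)) F) (α : Fin n → ℕ) : Prop :=
  sliceAt Q α ≠ 0 ∧ ∀ α' : Fin n → ℕ, sliceAt Q α' ≠ 0 → ∑ i, α i ≤ ∑ i, α' i

/-- The `(P, l)`-multiplicity of `Q` where `l` is the `x_d`-axis and
`P = (0, …, 0, p)`: the minimum over lowest `α` of the multiplicity of `p`
as a root of `f_α`. -/
noncomputable def axisMult {F : Type} [Field F] {n : ℕ}
    (Q : MvPolynomial (Fin (n + 1)) F) (p : F) : ℕ :=
  sInf {m : ℕ | ∃ α : Fin n → ℕ, IsLowest Q α ∧ m = (sliceAt Q α).rootMultiplicity p}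

lemma sum_rootMult_le {F : Type} [Field F] [DecidableEq F] (f : Polynomial F) (s : Finset F) :
    ∑ p ∈ s, f.rootMultiplicity p ≤ f.natDegree := by
  calc ∑ p ∈ s, f.rootMultiplicity p = ∑ p ∈ s, f.roots.count p := by
        simp [Polynomial.count_roots]
    _ = ∑ p ∈ s ∩ f.roots.toFinset, f.roots.count p := by
        refine (Finset.sum_subset (Finset.inter_subset_left) ?_).symm
        intro x hx hx'
        simp only [Finset.mem_inter, hx, true_and, Multiset.mem_toFinset] at hx'
        exact Multiset.count_eq_zero_of_notMem (by simpa using hx')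
    _ ≤ ∑ p ∈ f.roots.toFinset, f.roots.count p :=
        Finset.sum_le_sum_of_subset Finset.inter_subset_right
    _ = Multiset.card f.roots := Multiset.toFinset_sum_count_eq _
    _ ≤ f.natDegree := Polynomial.card_roots' f

lemma slice_coeff {F : Type} [Field F] {n : ℕ} (Q : MvPolynomial (Fin (n+1)) F)
    (α : Fin n → ℕ) (k : ℕ) (hk : k ≤ Q.totalDegree) :
    (sliceAt Q α).coeff k
      = MvPolynomial.coeff (Finsupp.equivFunOnFinite.symm (Fin.snoc α k)) Q := by
  rw [sliceAt, Polynomial.finset_sum_coeff]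
  rw [Finset.sum_eq_single k]
  · simp
  · intro j hj hjk
    simp [Polynomial.coeff_X_pow, Ne.symm hjk]
  · intro h
    exact absurd (Finset.mem_range.2 (Nat.lt_succ_of_le hk)) h

lemma exists_slice_ne_zero {F : Type} [Field F] {n : ℕ}
    (Q : MvPolynomial (Fin (n+1)) F) (hQ : Q ≠ 0) :
    ∃ α : Fin n → ℕ, sliceAt Q α ≠ 0 := by
  obtain ⟨m, hm⟩ := (MvPolynomial.support_nonempty (p := Q)).2 hQ
  refine ⟨fun i => m i.castSucc, fun h0 => ?_⟩
  have hmlast : m (Fin.last n) ≤ Q.totalDegree := by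
    refine le_trans ?_ (MvPolynomial.le_totalDegree hm)
    by_cases h : m (Fin.last n) = 0
    · simp [h]
    · exact Finset.single_le_sum (f := fun i => m i) (fun _ _ => Nat.zero_le _)
        (Finsupp.mem_support_iff.2 h)
  have hsnoc : Finsupp.equivFunOnFinite.symm
      (Fin.snoc (fun i => m i.castSucc) (m (Fin.last n)) : Fin (n+1) → ℕ) = m := by
    apply Finsupp.equivFunOnFinite.symm_apply_eq.2
    funext j
    refine Fin.lastCases ?_ ?_ j <;> simp [Fin.snoc]
  have := slice_coeff Q (fun i => m i.castSucc) (m (Fin.last n)) hmlast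
  rw [h0, hsnoc] at this
  exact (MvPolynomial.mem_support_iff.1 hm) this.symm

lemma slice_natDegree_le {F : Type} [Field F] {n : ℕ} (Q : MvPolynomial (Fin (n+1)) F)
    (α : Fin n → ℕ) : (sliceAt Q α).natDegree ≤ Q.totalDegree := by
  refine Polynomial.natDegree_sum_le_of_forall_le _ _ fun k hk => ?_
  have : k ≤ Q.totalDegree := Nat.lt_succ_iff.1 (Finset.mem_range.1 hk)
  calc (Polynomial.C _ * Polynomial.X ^ k).natDegree
      ≤ (Polynomial.C (MvPolynomial.coeff (Finsupp.equivFunOnFinite.symm (Fin.snoc α k)) Q)).natDegree + (Polynomial.X ^ k : Polynomial F).natDegree :=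
        Polynomial.natDegree_mul_le
    _ ≤ Q.totalDegree := by simp [this]

/-- The Bézout-type inequality: `∑_{p ∈ F} m_Q(P, l) ≤ deg Q` along the
`x_d`-axis (stated via arbitrary finite partial sums). -/
theorem stmt2 {F : Type} [Field F] {n : ℕ} (hn : 1 ≤ n)
    (Q : MvPolynomial (Fin (n + 1)) F) (hQ : Q ≠ 0) :
    ∀ s : Finset F, ∑ p ∈ s, axisMult Q p ≤ Q.totalDegree := by
  intro s
  classical
  obtain ⟨α1, hα1⟩ := exists_slice_ne_zero Q hQ
  have hSne : {m : ℕ | ∃ α : Fin n → ℕ, sliceAt Q α ≠ 0 ∧ ∑ i, α i = m}.Nonempty :=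
    ⟨∑ i, α1 i, α1, hα1, rfl⟩
  obtain ⟨α0, hα0ne, hα0sum⟩ := Nat.sInf_mem hSne
  have hlow : IsLowest Q α0 :=
    ⟨hα0ne, fun α' hα' => hα0sum ▸ Nat.sInf_le ⟨α', hα', rfl⟩⟩
  calc ∑ p ∈ s, axisMult Q p
      ≤ ∑ p ∈ s, (sliceAt Q α0).rootMultiplicity p :=
        Finset.sum_le_sum fun p _ => Nat.sInf_le ⟨α0, hlow, rfl⟩
    _ ≤ (sliceAt Q α0).natDegree := sum_rootMult_le _ s
    _ ≤ Q.totalDegree := slice_natDegree_le Q α0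
end

section
/- Let Q be a nonzero polynomial in d variables over a field F with Taylor expansion Q = Σ_β c_β x_1^{β_1} ··· x_{d-1}^{β_{d-1}} (x_d - p)^{β_d} around the point P = (0,...,0,p). Suppose β_0 is a multi-index with c_{β_0} ≠ 0 and |β_0| minimal among all β with c_β ≠ 0. Then the (P, l)-multiplicity of Q along the x_d-axis l is at least β_{0,d}. -/
open MvPolynomial

/-- The substitution `x_d ↦ x_d + p`, so that the coefficients of
`shiftLast p Q` are the Taylor coefficients of `Q` around `(0, …, 0, p)`. -/
noncomputable def shiftLast {F : Type} [Field F] {n : ℕ} (p : F)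
    (Q : MvPolynomial (Fin (n + 1)) F) : MvPolynomial (Fin (n + 1)) F :=
  MvPolynomial.aeval
    (fun i : Fin (n + 1) =>
      if i = Fin.last n then MvPolynomial.X i + MvPolynomial.C p else MvPolynomial.X i) Q


section Stmt3Aux

variable {F : Type} [Field F] {n : ℕ}

private lemma toF_apply' (γ : Fin (n+1) → ℕ) (i : Fin (n+1)) :
    (Finsupp.equivFunOnFinite.symm γ) i = γ i := rfl

private lemma cond_iff (v : Fin (n+1) →₀ ℕ) (α : Fin n → ℕ) (j k : ℕ) :
    (Finsupp.equivFunOnFinite.symm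
        (Fin.snoc (fun i => v (Fin.castSucc i)) (0:ℕ)) + Finsupp.single (Fin.last n) j
      = Finsupp.equivFunOnFinite.symm (Fin.snoc α k))
    ↔ (j = k ∧ ∀ i : Fin n, v (Fin.castSucc i) = α i) := by
  rw [DFunLike.ext_iff]
  constructor
  · intro h
    constructor
    · have := h (Fin.last n)
      simpa [toF_apply', Finsupp.add_apply, Finsupp.single_apply] using this
    · intro i
      have := h (Fin.castSucc i)
      simpa [toF_apply', Finsupp.add_apply, Finsupp.single_apply,
        (Fin.castSucc_lt_last i).ne, (Fin.castSucc_lt_last i).ne'] using this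
  · rintro ⟨rfl, h⟩ i
    induction i using Fin.lastCases with
    | last => simp [toF_apply', Finsupp.add_apply, Finsupp.single_apply]
    | cast i =>
      simp [toF_apply', Finsupp.add_apply, Finsupp.single_apply,
        (Fin.castSucc_lt_last i).ne, (Fin.castSucc_lt_last i).ne', h i]

private lemma coeff_shiftLast_monomial (p : F) (v : Fin (n+1) →₀ ℕ) (c : F)
    (α : Fin n → ℕ) (k : ℕ) :
    MvPolynomial.coeff (Finsupp.equivFunOnFinite.symm (Fin.snoc α k))
        (shiftLast p (MvPolynomial.monomial v c)) =
      if (∀ i : Fin n, v (Fin.castSucc i) = α i) then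
        c * (p ^ (v (Fin.last n) - k) * ((v (Fin.last n)).choose k : F)) else 0 := by
  classical
  set t := v (Fin.last n) with ht
  set w : Fin (n+1) →₀ ℕ :=
    Finsupp.equivFunOnFinite.symm (Fin.snoc (fun i => v (Fin.castSucc i)) (0:ℕ)) with hw
  have hprod : shiftLast p (MvPolynomial.monomial v c) =
      (MvPolynomial.monomial w c) * (MvPolynomial.X (Fin.last n) + MvPolynomial.C p) ^ t := by
    unfold shiftLast
    rw [MvPolynomial.aeval_monomial]
    rw [Finsupp.prod_fintype _ _ (fun i => pow_zero _)]
    rw [Fin.prod_univ_castSucc]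
    have h1 : ∀ i : Fin n,
        (if (Fin.castSucc i : Fin (n+1)) = Fin.last n then
            MvPolynomial.X (Fin.castSucc i) + MvPolynomial.C p
          else MvPolynomial.X (Fin.castSucc i)) = (MvPolynomial.X (Fin.castSucc i) :
          MvPolynomial (Fin (n+1)) F) := fun i => if_neg (Fin.castSucc_lt_last i).ne
    simp only [h1, if_pos rfl]
    rw [MvPolynomial.monomial_eq]
    rw [Finsupp.prod_fintype _ _ (fun i => pow_zero _)]
    rw [Fin.prod_univ_castSucc]
    have h2 : ∀ i : Fin n, w (Fin.castSucc i) = v (Fin.castSucc i) := fun i => by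
      simp [hw, toF_apply']
    have h3 : w (Fin.last n) = 0 := by simp [hw, toF_apply']
    simp only [h2, h3, pow_zero, mul_one, if_true]
    rw [MvPolynomial.algebraMap_eq, mul_assoc]
  rw [hprod]
  rw [add_pow]
  rw [Finset.mul_sum]
  have hterm : ∀ j ∈ Finset.range (t+1),
      (MvPolynomial.monomial w c) *
        (MvPolynomial.X (Fin.last n) ^ j * MvPolynomial.C p ^ (t - j) *
          (t.choose j : MvPolynomial (Fin (n+1)) F)) =
      MvPolynomial.monomial (w + Finsupp.single (Fin.last n) j)
        (c * (p ^ (t - j) * (t.choose j : F))) := by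
    intro j _
    rw [MvPolynomial.X_pow_eq_monomial, ← MvPolynomial.C_pow,
      show ((t.choose j : ℕ) : MvPolynomial (Fin (n+1)) F)
          = MvPolynomial.C ((t.choose j : ℕ) : F) from
        (map_natCast (MvPolynomial.C : F →+* MvPolynomial (Fin (n+1)) F) _).symm]
    simp only [MvPolynomial.C_apply, MvPolynomial.monomial_mul, add_zero, mul_one, one_mul]
  rw [Finset.sum_congr rfl hterm]
  rw [MvPolynomial.coeff_sum]
  simp_rw [MvPolynomial.coeff_monomial, hw, cond_iff]
  by_cases hP : ∀ i : Fin n, v (Fin.castSucc i) = α i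
  · simp only [hP, implies_true, and_true]
    rw [Finset.sum_ite_eq' (Finset.range (t+1)) k fun j => c * (p ^ (t - j) * (t.choose j : F))]
    by_cases hk : k ∈ Finset.range (t+1)
    · rw [if_pos hk, if_pos trivial]
    · rw [if_neg hk, if_pos trivial]
      have : t.choose k = 0 := Nat.choose_eq_zero_of_lt (by simp at hk; omega)
      simp [this]
  · simp [hP]

private lemma eq_toF_snoc_iff (v : Fin (n+1) →₀ ℕ) (α : Fin n → ℕ) (m : ℕ) :
    v = Finsupp.equivFunOnFinite.symm (Fin.snoc α m)
      ↔ (v (Fin.last n) = m ∧ ∀ i : Fin n, v (Fin.castSucc i) = α i) := by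
  rw [DFunLike.ext_iff]
  constructor
  · intro h
    exact ⟨by simpa [toF_apply'] using h (Fin.last n),
      fun i => by simpa [toF_apply'] using h (Fin.castSucc i)⟩
  · rintro ⟨h1, h2⟩ i
    induction i using Fin.lastCases with
    | last => simpa [toF_apply'] using h1
    | cast i => simpa [toF_apply'] using h2 i

private lemma coeff_shiftLast (p : F) (Q : MvPolynomial (Fin (n+1)) F)
    (α : Fin n → ℕ) (k : ℕ) :
    MvPolynomial.coeff (Finsupp.equivFunOnFinite.symm (Fin.snoc α k)) (shiftLast p Q)
      = (Polynomial.taylor p (sliceAt Q α)).coeff k := by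
  classical
  set N := Q.totalDegree + 1 with hN
  have hRHS : (Polynomial.taylor p (sliceAt Q α)).coeff k
      = ∑ m ∈ Finset.range N,
          MvPolynomial.coeff (Finsupp.equivFunOnFinite.symm (Fin.snoc α m)) Q *
            (p ^ (m - k) * (m.choose k : F)) := by
    unfold sliceAt
    rw [map_sum, Polynomial.finset_sum_coeff]
    refine Finset.sum_congr rfl fun m _ => ?_
    rw [Polynomial.taylor_apply, Polynomial.mul_comp, Polynomial.C_comp, Polynomial.pow_comp,
      Polynomial.X_comp, Polynomial.coeff_C_mul, Polynomial.coeff_X_add_C_pow]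
  rw [hRHS]
  have hLHS : shiftLast p Q
      = ∑ v ∈ Q.support, shiftLast p (MvPolynomial.monomial v (MvPolynomial.coeff v Q)) := by
    unfold shiftLast
    rw [← map_sum, ← Q.as_sum]
  rw [hLHS, MvPolynomial.coeff_sum]
  simp_rw [coeff_shiftLast_monomial]
  have hco : ∀ m : ℕ, MvPolynomial.coeff (Finsupp.equivFunOnFinite.symm (Fin.snoc α m)) Q
      = ∑ v ∈ Q.support,
          (if v = Finsupp.equivFunOnFinite.symm (Fin.snoc α m) then
            MvPolynomial.coeff v Q else 0) := by
    intro m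
    rw [Finset.sum_ite_eq' Q.support (Finsupp.equivFunOnFinite.symm (Fin.snoc α m))
      (fun v => MvPolynomial.coeff v Q)]
    split
    · rfl
    · next h => exact MvPolynomial.notMem_support_iff.mp h
  simp_rw [hco, Finset.sum_mul, ite_mul, zero_mul]
  rw [Finset.sum_comm]
  refine Finset.sum_congr rfl fun v hv => ?_
  have hvle : v (Fin.last n) < N := by
    have h1 := MvPolynomial.le_totalDegree hv
    have h2 : v.sum (fun _ e => e) = ∑ i, v i := Finsupp.sum_fintype _ _ (fun _ => rfl)
    have h3 : v (Fin.last n) ≤ ∑ i, v i :=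
      Finset.single_le_sum (fun i _ => Nat.zero_le (v i)) (Finset.mem_univ (Fin.last n))
    omega
  have hstep : ∀ m ∈ Finset.range N,
      (if v = Finsupp.equivFunOnFinite.symm (Fin.snoc α m) then
          MvPolynomial.coeff v Q * (p ^ (m - k) * (m.choose k : F)) else 0)
      = (if m = v (Fin.last n) then
          (if (∀ i : Fin n, v (Fin.castSucc i) = α i) then
            MvPolynomial.coeff v Q *
              (p ^ (v (Fin.last n) - k) * ((v (Fin.last n)).choose k : F)) else 0) else 0) := by
    intro m _
    by_cases hm : m = v (Fin.last n)
    · subst hm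
      rw [if_pos rfl]
      by_cases hP : ∀ i : Fin n, v (Fin.castSucc i) = α i
      · rw [if_pos ((eq_toF_snoc_iff v α _).mpr ⟨rfl, hP⟩), if_pos hP]
      · rw [if_neg, if_neg hP]
        rw [eq_toF_snoc_iff]
        tauto
    · rw [if_neg, if_neg hm]
      rw [eq_toF_snoc_iff]
      tauto
  rw [Finset.sum_congr rfl hstep,
    Finset.sum_ite_eq' (Finset.range N) (v (Fin.last n)), if_pos (Finset.mem_range.mpr hvle)]

end Stmt3Aux

/-- If `β₀` has nonzero Taylor coefficient of `Q` around `P = (0, …, 0, p)` and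
`|β₀|` is minimal, then the `(P, x_d-axis)`-multiplicity of `Q` is ≥ `β₀_d`. -/
theorem stmt3 {F : Type} [Field F] {n : ℕ} (hn : 1 ≤ n)
    (Q : MvPolynomial (Fin (n + 1)) F) (hQ : Q ≠ 0) (p : F)
    (β₀ : Fin (n + 1) → ℕ)
    (hβ₀ : MvPolynomial.coeff (Finsupp.equivFunOnFinite.symm β₀) (shiftLast p Q) ≠ 0)
    (hmin : ∀ β : Fin (n + 1) → ℕ,
      MvPolynomial.coeff (Finsupp.equivFunOnFinite.symm β) (shiftLast p Q) ≠ 0 →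
      ∑ i, β₀ i ≤ ∑ i, β i) :
    β₀ (Fin.last n) ≤ axisMult Q p := by
  classical
  set α₀ : Fin n → ℕ := Fin.init β₀ with hα₀
  have hsnoc : (Fin.snoc α₀ (β₀ (Fin.last n)) : Fin (n+1) → ℕ) = β₀ := Fin.snoc_init_self β₀
  have h0 : (Polynomial.taylor p (sliceAt Q α₀)).coeff (β₀ (Fin.last n)) ≠ 0 := by
    rw [← coeff_shiftLast, hsnoc]
    exact hβ₀
  have hslice₀ : sliceAt Q α₀ ≠ 0 := by
    intro h
    apply h0
    rw [h]
    simp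
  have hβsum : ∑ i, β₀ i = (∑ i, α₀ i) + β₀ (Fin.last n) := by
    rw [Fin.sum_univ_castSucc]
    rfl
  have hkey : ∀ α : Fin n → ℕ, IsLowest Q α →
      β₀ (Fin.last n) ≤ (sliceAt Q α).rootMultiplicity p := by
    rintro α ⟨hα, hlow⟩
    rw [Polynomial.le_rootMultiplicity_iff hα]
    have hc : ∀ j : ℕ, j < β₀ (Fin.last n) →
        (Polynomial.taylor p (sliceAt Q α)).coeff j = 0 := by
      intro j hj
      by_contra hne
      rw [← coeff_shiftLast] at hne
      have h1 := hmin (Fin.snoc α j) hne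
      have h2 := hlow α₀ hslice₀
      rw [hβsum, Fin.sum_univ_castSucc] at h1
      simp only [Fin.snoc_castSucc, Fin.snoc_last] at h1
      omega
    obtain ⟨h, hh⟩ := Polynomial.X_pow_dvd_iff.mpr hc
    refine ⟨Polynomial.taylor (-p) h, ?_⟩
    have h4 : sliceAt Q α = Polynomial.taylor (-p) (Polynomial.taylor p (sliceAt Q α)) := by
      rw [Polynomial.taylor_taylor]
      simp
    rw [h4, hh, Polynomial.taylor_mul]
    congr 1
    rw [Polynomial.taylor_apply, Polynomial.pow_comp, Polynomial.X_comp, map_neg,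
      sub_eq_add_neg]
  have hex : ∃ α : Fin n → ℕ, IsLowest Q α := by
    have hSne : {s : ℕ | ∃ α : Fin n → ℕ, sliceAt Q α ≠ 0 ∧ ∑ i, α i = s}.Nonempty :=
      ⟨∑ i, α₀ i, α₀, hslice₀, rfl⟩
    obtain ⟨αm, hαm, hs⟩ := Nat.sInf_mem hSne
    exact ⟨αm, hαm, fun α' hα' => hs ▸ Nat.sInf_le ⟨α', hα', rfl⟩⟩
  obtain ⟨αm, hm⟩ := hex
  refine le_csInf ⟨(sliceAt Q αm).rootMultiplicity p, αm, hm, rfl⟩ ?_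
  rintro m ⟨α, hα, rfl⟩
  exact hkey α hα
end

section
/- (Joints Theorem over an arbitrary field) Let L be a finite set of N lines in F^d with d ≥ 2, where F is any field. A joint of L is a point P such that there exist d lines of L through P whose direction vectors are linearly independent. Then the number of joints is at most C(d) * N^(d/(d-1)). -/
/-- A line in `F^d`: a one-dimensional affine subspace. -/
def IsLine {F : Type} [Field F] {d : ℕ} (s : Set (Fin d → F)) : Prop :=
  ∃ a v : Fin d → F, v ≠ 0 ∧ s = {x | ∃ t : F, x = a + t • v}

/-- The line through `P` with direction `v`. -/
def lineThrough {F : Type} [Field F] {d : ℕ} (P v : Fin d → F) : Set (Fin d → F) :=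
  {x | ∃ t : F, x = P + t • v}

open MvPolynomial Polynomial

noncomputable section JointsProof
variable {F : Type} [Field F] {d : ℕ}

/-- Composition of a multivariate polynomial with a parametrized line. -/
def lcomp (a w : Fin d → F) : MvPolynomial (Fin d) F →ₐ[F] Polynomial F :=
  MvPolynomial.aeval (fun j => Polynomial.C (a j) + Polynomial.C (w j) * Polynomial.X)

lemma eval_lcomp (a w : Fin d → F) (h : MvPolynomial (Fin d) F) (t : F) :
    (lcomp a w h).eval t = MvPolynomial.eval (fun j => a j + t * w j) h := by
  have hC : (Polynomial.evalRingHom t).comp (Polynomial.C : F →+* Polynomial F) = RingHom.id F := by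
    ext x; simp
  rw [lcomp, MvPolynomial.aeval_def, ← Polynomial.coe_evalRingHom,
    MvPolynomial.eval₂_comp_left (Polynomial.evalRingHom t)]
  simp only [Polynomial.coe_evalRingHom, Function.comp_def, Polynomial.eval_add,
    Polynomial.eval_C, Polynomial.eval_mul, Polynomial.eval_X]
  rw [show (algebraMap F (Polynomial F)) = (Polynomial.C : F →+* Polynomial F) from rfl, hC]
  rw [MvPolynomial.eval, MvPolynomial.eval₂Hom]
  congr 1
  ext j
  ring

lemma natDegree_lcomp (a w : Fin d → F) (h : MvPolynomial (Fin d) F) :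
    (lcomp a w h).natDegree ≤ h.totalDegree := by
  conv_lhs => rw [h.as_sum]
  rw [map_sum]
  apply Polynomial.natDegree_sum_le_of_forall_le
  intro α hα
  rw [lcomp, MvPolynomial.aeval_monomial]
  apply le_trans (Polynomial.natDegree_mul_le)
  have h1 : (algebraMap F (Polynomial F) (MvPolynomial.coeff α h)).natDegree = 0 := by
    exact Polynomial.natDegree_C _
  rw [h1, zero_add]
  calc (α.prod fun j k => (Polynomial.C (a j) + Polynomial.C (w j) * Polynomial.X) ^ k).natDegree
      ≤ ∑ j ∈ α.support, ((Polynomial.C (a j) + Polynomial.C (w j) * Polynomial.X) ^ (α j)).natDegree := by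
        exact Polynomial.natDegree_prod_le _ _
    _ ≤ ∑ j ∈ α.support, α j := by
        apply Finset.sum_le_sum
        intro j _
        apply le_trans (Polynomial.natDegree_pow_le)
        have : (Polynomial.C (a j) + Polynomial.C (w j) * Polynomial.X).natDegree ≤ 1 := by
          apply le_trans (Polynomial.natDegree_add_le _ _)
          simp [Polynomial.natDegree_C_mul_le]
          exact Polynomial.natDegree_C_mul_le _ _ |>.trans (by simp)
        calc α j * (Polynomial.C (a j) + Polynomial.C (w j) * Polynomial.X).natDegree
            ≤ α j * 1 := Nat.mul_le_mul_left _ this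
          _ = α j := Nat.mul_one _
    _ ≤ h.totalDegree := MvPolynomial.le_totalDegree hα

lemma derivative_aeval_line (f : Fin d → Polynomial F) (h : MvPolynomial (Fin d) F) :
    Polynomial.derivative (MvPolynomial.aeval f h) =
      ∑ j, Polynomial.derivative (f j) * MvPolynomial.aeval f (MvPolynomial.pderiv j h) := by
  induction h using MvPolynomial.induction_on with
  | C c => simp
  | add p q hp hq => simp [map_add, hp, hq, mul_add, Finset.sum_add_distrib]
  | mul_X p i hp =>
      have key : ∀ j : Fin d, Polynomial.derivative (f j) *
            MvPolynomial.aeval f (MvPolynomial.pderiv j p * MvPolynomial.X i + p * Pi.single (M := fun _ => MvPolynomial (Fin d) F) j 1 i)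
          = (Polynomial.derivative (f j) * MvPolynomial.aeval f (MvPolynomial.pderiv j p)) * f i
            + (if j = i then (MvPolynomial.aeval f) p * Polynomial.derivative (f i) else 0) := by
        intro j
        by_cases hj : j = i
        · subst hj
          simp [Pi.single_apply]
          ring
        · simp [Pi.single_apply, hj]
          ring
      simp only [map_mul, MvPolynomial.aeval_X, Polynomial.derivative_mul, hp,
        MvPolynomial.pderiv_mul, MvPolynomial.pderiv_X]
      conv_rhs => rw [Finset.sum_congr rfl (fun j _ => key j)]
      rw [Finset.sum_add_distrib, Finset.sum_ite_eq' Finset.univ i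
          (fun _ => (MvPolynomial.aeval f) p * Polynomial.derivative (f i))]
      simp [Finset.sum_mul]

lemma totalDegree_pderiv_le (j : Fin d) (h : MvPolynomial (Fin d) F) :
    (MvPolynomial.pderiv j h).totalDegree ≤ h.totalDegree - 1 := by
  conv_lhs => rw [h.as_sum]
  rw [map_sum]
  apply le_trans (MvPolynomial.totalDegree_finset_sum _ _)
  apply Finset.sup_le
  intro α hα
  rw [MvPolynomial.pderiv_monomial]
  by_cases h0 : α j = 0
  · simp [h0]
  · apply le_trans (MvPolynomial.totalDegree_monomial_le _ _)
    have hj : 1 ≤ α j := Nat.one_le_iff_ne_zero.mpr h0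
    have h1 : ((α - Finsupp.single j 1 : Fin d →₀ ℕ).sum fun _ e => e) + 1 ≤ α.sum fun _ e => e := by
      rw [Finsupp.sum_fintype _ _ (fun _ => rfl), Finsupp.sum_fintype _ _ (fun _ => rfl)]
      rw [← Finset.add_sum_erase _ (fun k => (α - Finsupp.single j 1 : Fin d →₀ ℕ) k) (Finset.mem_univ j),
          ← Finset.add_sum_erase _ (fun k => α k) (Finset.mem_univ j)]
      have e1 : (α - Finsupp.single j 1 : Fin d →₀ ℕ) j = α j - 1 := by
        rw [Finsupp.tsub_apply, Finsupp.single_apply]; simp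
      have e2 : ∑ k ∈ Finset.univ.erase j, (α - Finsupp.single j 1 : Fin d →₀ ℕ) k
          = ∑ k ∈ Finset.univ.erase j, α k := by
        apply Finset.sum_congr rfl
        intro k hk
        rw [Finsupp.tsub_apply, Finsupp.single_apply, if_neg (Finset.ne_of_mem_erase hk).symm]
        simp
      rw [e1, e2]
      omega
    have h2 : (α.sum fun _ e => e) ≤ h.totalDegree := MvPolynomial.le_totalDegree hα
    have h3 : ((α - Finsupp.single j 1 : Fin d →₀ ℕ).sum fun _ => id)
        = ((α - Finsupp.single j 1 : Fin d →₀ ℕ).sum fun _ e => e) := rfl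
    omega

lemma expand_monomial' (q : ℕ) (hq : q ≠ 0) (s : Fin d →₀ ℕ) (r : F) :
    MvPolynomial.expand q (MvPolynomial.monomial s r) = MvPolynomial.monomial (q • s) r := by
  rw [MvPolynomial.expand_monomial, MvPolynomial.monomial_eq]

lemma eval_expand' (q : ℕ) (g : MvPolynomial (Fin d) F) (x : Fin d → F) :
    MvPolynomial.eval x (MvPolynomial.expand q g) = MvPolynomial.eval (fun i => x i ^ q) g := by
  have h1 : (MvPolynomial.expand q g : MvPolynomial (Fin d) F)
      = MvPolynomial.eval₂ MvPolynomial.C (fun i => MvPolynomial.X i ^ q) g := rfl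
  rw [h1, MvPolynomial.eval₂_comp_left (MvPolynomial.eval x)]
  have h2 : (MvPolynomial.eval x).comp (MvPolynomial.C : F →+* MvPolynomial (Fin d) F)
      = RingHom.id F := by ext r; simp
  rw [h2]
  simp only [Function.comp_def, map_pow, MvPolynomial.eval_X]
  exact MvPolynomial.eval₂_id _

lemma coeff_pderiv' (j : Fin d) (h : MvPolynomial (Fin d) F) (α : Fin d →₀ ℕ) (hj : 1 ≤ α j) :
    MvPolynomial.coeff (α - Finsupp.single j 1) (MvPolynomial.pderiv j h)
      = MvPolynomial.coeff α h * (α j : F) := by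
  have key : ∀ β : Fin d →₀ ℕ, β ≠ α → 1 ≤ β j →
      (β - Finsupp.single j 1 : Fin d →₀ ℕ) ≠ (α - Finsupp.single j 1 : Fin d →₀ ℕ) := by
    intro β hne hβj heq
    apply hne
    ext k
    have := DFunLike.congr_fun heq k
    rw [Finsupp.tsub_apply, Finsupp.tsub_apply, Finsupp.single_apply] at this
    by_cases hk : j = k
    · subst hk; simp at this; omega
    · rw [if_neg hk] at this; simpa using this
  conv_lhs => rw [h.as_sum, map_sum]
  rw [MvPolynomial.coeff_sum]
  rw [Finset.sum_congr rfl (fun β _ => by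
    rw [MvPolynomial.pderiv_monomial, MvPolynomial.coeff_monomial])]
  by_cases hmem : α ∈ h.support
  · rw [Finset.sum_eq_single α]
    · rw [if_pos rfl]
    · intro β hβ hne
      by_cases hβj : β j = 0
      · split <;> simp [hβj]
      · rw [if_neg (key β hne (Nat.one_le_iff_ne_zero.mpr hβj))]
    · intro hnot; exact absurd hmem hnot
  · rw [MvPolynomial.notMem_support_iff.mp hmem, zero_mul]
    apply Finset.sum_eq_zero
    intro β hβ
    by_cases hβj : β j = 0
    · split <;> simp [hβj]
    · rw [if_neg (key β (fun hc => hmem (hc ▸ hβ)) (Nat.one_le_iff_ne_zero.mpr hβj))]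
lemma lcomp_zero_of_roots {n : ℕ} (a w : Fin d → F) (h : MvPolynomial (Fin d) F)
    (hdeg : h.totalDegree ≤ n) (S : Finset F) (hS : n < S.card)
    (hvan : ∀ t ∈ S, MvPolynomial.eval (fun j => a j + t * w j) h = 0) :
    lcomp a w h = 0 :=
  Polynomial.eq_zero_of_natDegree_lt_card_of_eval_eq_zero' _ S
    (fun t ht => by rw [eval_lcomp]; exact hvan t ht)
    (lt_of_le_of_lt (le_trans (natDegree_lcomp a w h) hdeg) hS)

lemma grad_vanish (h : MvPolynomial (Fin d) F)
    (x : Fin d → F) (v : Fin d → Fin d → F) (hv : LinearIndependent F v)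
    (hline : ∀ i, lcomp x (v i) h = 0) :
    ∀ j, MvPolynomial.eval x (MvPolynomial.pderiv j h) = 0 := by
  set u : Fin d → F := fun j => MvPolynomial.eval x (MvPolynomial.pderiv j h) with hu
  have hrel : ∀ i, ∑ j, v i j * u j = 0 := by
    intro i
    have h0 : Polynomial.derivative (lcomp x (v i) h) = 0 := by rw [hline i, map_zero]
    have hldef : lcomp x (v i) = (MvPolynomial.aeval (fun j => Polynomial.C (x j) + Polynomial.C (v i j) * Polynomial.X) : MvPolynomial (Fin d) F →ₐ[F] Polynomial F) := rfl
    rw [hldef] at h0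
    rw [derivative_aeval_line] at h0
    have h1 := congrArg (Polynomial.eval 0) h0
    rw [Polynomial.eval_finset_sum] at h1
    simp only [Polynomial.eval_zero] at h1
    rw [← h1]
    apply Finset.sum_congr rfl
    intro j _
    rw [Polynomial.eval_mul]
    congr 1
    · simp
    · rw [← hldef, eval_lcomp]
      simp [hu]
  have hM : IsUnit (Matrix.of v) := by
    rw [← Matrix.linearIndependent_rows_iff_isUnit]
    exact hv
  have hinj := Matrix.mulVec_injective_iff_isUnit.mpr hM
  have hu0 : u = 0 := by
    apply hinj
    rw [Matrix.mulVec_zero]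
    funext i
    simpa [Matrix.mulVec, dotProduct] using hrel i
  intro j
  exact congrFun hu0 j
/-- Core induction: if a nonzero polynomial of degree ≤ n vanishes on a "joint configuration"
in which every relevant line meets the set in more than n points, the set is empty. -/
lemma core (d : ℕ) (n : ℕ) : ∀ (F : Type) [Field F],
    ∀ (J : Set (Fin d → F)) (Λ : Set ((Fin d → F) × (Fin d → F)))
      (h : MvPolynomial (Fin d) F),
      h ≠ 0 → h.totalDegree ≤ n →
      (∀ x ∈ J, MvPolynomial.eval x h = 0) →
      (∀ x ∈ J, ∃ v : Fin d → (Fin d → F), LinearIndependent F v ∧ ∀ i, (x, v i) ∈ Λ) →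
      (∀ p ∈ Λ, ∃ S : Finset F, n < S.card ∧ ∀ t ∈ S, (fun j => p.1 j + t * p.2 j) ∈ J) →
      J = ∅ := by
  induction n using Nat.strong_induction_on with
  | _ n IH =>
  intro F _inst J Λ h hne hdeg hvan hjoint hlines
  classical
  by_contra hJne
  obtain ⟨x₀, hx₀⟩ := Set.nonempty_iff_ne_empty.mpr hJne
  -- Step 1 : all first partial derivatives vanish on J
  have hgrad : ∀ x ∈ J, ∀ j, MvPolynomial.eval x (MvPolynomial.pderiv j h) = 0 := by
    intro x hx
    obtain ⟨v, hv, hmem⟩ := hjoint x hx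
    apply grad_vanish h x v hv
    intro i
    obtain ⟨S, hS, hSJ⟩ := hlines _ (hmem i)
    exact lcomp_zero_of_roots x (v i) h hdeg S hS (fun t ht => hvan _ (hSJ t ht))
  by_cases hdeg0 : h.totalDegree = 0
  · -- h is a nonzero constant, but vanishes at x₀
    rw [MvPolynomial.totalDegree_eq_zero_iff] at hdeg0
    have hsupp : h.support = {0} := by
      have hnonempty : h.support.Nonempty := by
        rw [Finset.nonempty_iff_ne_empty]
        intro hc
        exact hne (MvPolynomial.support_eq_empty.mp hc)
      obtain ⟨β, hβ⟩ := hnonempty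
      have hβ0 : β = 0 := by ext k; exact hdeg0 β hβ k
      subst hβ0
      ext α
      simp only [Finset.mem_singleton]
      constructor
      · intro hα; ext k; exact hdeg0 α hα k
      · intro hα; subst hα; exact hβ
    have heval : MvPolynomial.eval x₀ h = MvPolynomial.coeff 0 h := by
      rw [MvPolynomial.eval_eq, hsupp, Finset.sum_singleton]
      simp
    have hc0 : MvPolynomial.coeff 0 h ≠ 0 := by
      rw [← MvPolynomial.mem_support_iff, hsupp]
      exact Finset.mem_singleton_self 0
    exact hc0 (heval ▸ hvan x₀ hx₀)
  · have hn1 : 1 ≤ n := le_trans (Nat.one_le_iff_ne_zero.mpr hdeg0) hdeg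
    by_cases hdcase : ∃ j, MvPolynomial.pderiv j h ≠ 0
    · obtain ⟨j₀, hj₀⟩ := hdcase
      have hdeg' : (MvPolynomial.pderiv j₀ h).totalDegree ≤ n - 1 :=
        le_trans (totalDegree_pderiv_le j₀ h) (by omega)
      have := IH (n-1) (by omega) F J Λ (MvPolynomial.pderiv j₀ h) hj₀ hdeg'
        (fun x hx => hgrad x hx j₀) hjoint
        (fun p hp => by obtain ⟨S, hS, h2⟩ := hlines p hp; exact ⟨S, by omega, h2⟩)
      exact hJne this
    · push_neg at hdcase
      set q := ringChar F with hqdef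
      haveI : CharP F q := ringChar.charP F
      have hdvd : ∀ α ∈ h.support, ∀ j, q ∣ α j := by
        intro α hα j
        by_cases hz : α j = 0
        · simp [hz]
        · have h1 := coeff_pderiv' j h α (Nat.one_le_iff_ne_zero.mpr hz)
          rw [hdcase j, MvPolynomial.coeff_zero] at h1
          have h2 : (α j : F) = 0 := by
            have := MvPolynomial.mem_support_iff.mp hα
            field_simp at h1
            exact (mul_eq_zero.mp h1.symm).resolve_left this
          exact (CharP.cast_eq_zero_iff F q (α j)).mp h2
      have hq0 : q ≠ 0 := by
        intro hq
        apply hdeg0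
        rw [MvPolynomial.totalDegree_eq_zero_iff]
        intro α hα j
        have := hdvd α hα j
        rw [hq] at this
        exact zero_dvd_iff.mp this
      have hqprime : q.Prime := (CharP.char_is_prime_or_zero F q).resolve_right hq0
      haveI : Fact q.Prime := ⟨hqprime⟩
      have hq2 : 2 ≤ q := hqprime.two_le
      -- build g with expand q g = h
      set divq : (Fin d →₀ ℕ) → (Fin d →₀ ℕ) :=
        fun α => α.mapRange (· / q) (Nat.zero_div q) with hdivq
      set g : MvPolynomial (Fin d) F :=
        ∑ α ∈ h.support, MvPolynomial.monomial (divq α) (MvPolynomial.coeff α h) with hg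
      have hsmul : ∀ α ∈ h.support, q • divq α = α := by
        intro α hα
        ext k
        rw [Finsupp.smul_apply, smul_eq_mul, hdivq, Finsupp.mapRange_apply]
        exact Nat.mul_div_cancel' (hdvd α hα k)
      have hexp : MvPolynomial.expand q g = h := by
        rw [hg, map_sum]
        conv_rhs => rw [h.as_sum]
        apply Finset.sum_congr rfl
        intro α hα
        rw [expand_monomial' q hq0, hsmul α hα]
      have hgne : g ≠ 0 := fun hgz => hne (by rw [← hexp, hgz, map_zero])
      have hgdeg : g.totalDegree ≤ n - 1 := by
        rw [hg]
        apply le_trans (MvPolynomial.totalDegree_finset_sum _ _)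
        apply Finset.sup_le
        intro α hα
        apply le_trans (MvPolynomial.totalDegree_monomial_le _ _)
        have hkey : ((divq α).sum fun _ e => e) * q = α.sum fun _ e => e := by
          rw [Finsupp.sum_fintype _ _ (fun _ => rfl), Finsupp.sum_fintype _ _ (fun _ => rfl),
            Finset.sum_mul]
          apply Finset.sum_congr rfl
          intro k _
          rw [hdivq, Finsupp.mapRange_apply, Nat.div_mul_cancel (hdvd α hα k)]
        have hsum : (α.sum fun _ e => e) ≤ n := le_trans (MvPolynomial.le_totalDegree hα) hdeg
        have hs2 : ((divq α).sum fun _ e => e) * 2 ≤ n :=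
          le_trans (le_trans (Nat.mul_le_mul_left _ hq2) (le_of_eq hkey)) hsum
        have hid : ((divq α).sum fun _ => id) = ((divq α).sum fun _ e => e) := rfl
        omega
      -- Frobenius images
      set φ : F →+* F := frobenius F q with hφ
      set ψ : (Fin d → F) → (Fin d → F) := fun x => fun i => x i ^ q with hψ
      have hφψ : ∀ x : Fin d → F, ψ x = fun i => φ (x i) := by
        intro x; funext i; rw [hφ]; rfl
      set J' : Set (Fin d → F) := ψ '' J with hJ'
      set Λ' : Set ((Fin d → F) × (Fin d → F)) :=
        (fun p : (Fin d → F) × (Fin d → F) => (ψ p.1, ψ p.2)) '' Λ with hΛ'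
      have hempty : J' = ∅ := by
        apply IH (n-1) (by omega) F J' Λ' g hgne hgdeg
        · rintro x' ⟨x, hx, rfl⟩
          have := eval_expand' q g x
          rw [hexp] at this
          rw [hψ, ← this]
          exact hvan x hx
        · rintro x' ⟨x, hx, rfl⟩
          obtain ⟨v, hv, hmem⟩ := hjoint x hx
          refine ⟨fun i => ψ (v i), ?_, fun i => ⟨(x, v i), hmem i, rfl⟩⟩
          -- independence of Frobenius images
          have hM : IsUnit (Matrix.of v) := Matrix.linearIndependent_rows_iff_isUnit.mp hv
          have hdet : (Matrix.of v).det ≠ 0 := by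
            intro hz
            rw [Matrix.isUnit_iff_isUnit_det, hz] at hM
            simpa using hM
          have hdet' : ((Matrix.of v).map φ).det ≠ 0 := by
            rw [← RingHom.mapMatrix_apply, ← RingHom.map_det]
            intro hz
            exact hdet (frobenius_inj F q (by rw [hz, map_zero]))
          have hM' : IsUnit ((Matrix.of v).map φ) := by
            rw [Matrix.isUnit_iff_isUnit_det]
            exact isUnit_iff_ne_zero.mpr hdet'
          have hli := Matrix.linearIndependent_rows_iff_isUnit.mpr hM'
          have heq : (fun i => ψ (v i)) = (fun i => ((Matrix.of v).map ⇑φ) i) := by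
            funext i j
            rw [hφψ (v i)]
            rfl
          rw [heq]
          exact hli
        · rintro p' ⟨⟨a, w⟩, hp, rfl⟩
          obtain ⟨S, hS, hSJ⟩ := hlines (a, w) hp
          have hpowinj : Function.Injective (fun t : F => t ^ q) := by
            intro x y hxy
            apply frobenius_inj F q
            rw [frobenius_def, frobenius_def]
            exact hxy
          refine ⟨S.image (fun t => t ^ q), ?_, ?_⟩
          · rw [Finset.card_image_of_injective _ hpowinj]
            omega
          · intro t' ht'
            obtain ⟨t, ht, rfl⟩ := Finset.mem_image.mp ht'
            refine ⟨fun j => a j + t * w j, hSJ t ht, ?_⟩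
            funext j
            rw [hψ]
            simp only
            rw [add_pow_char, mul_pow]
      rw [hJ'] at hempty
      exact absurd hempty (Set.nonempty_iff_ne_empty.mp ⟨ψ x₀, Set.mem_image_of_mem _ hx₀⟩)

lemma exists_low_degree (J : Set (Fin d → F)) (hJ : J.Finite) (k : ℕ)
    (hcard : J.ncard < (k+1)^d) :
    ∃ h : MvPolynomial (Fin d) F, h ≠ 0 ∧ h.totalDegree ≤ d * k ∧
      ∀ x ∈ J, MvPolynomial.eval x h = 0 := by
  classical
  set T := hJ.toFinset with hT
  set toF : (Fin d → Fin (k+1)) → (Fin d →₀ ℕ) :=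
    fun e => Finsupp.equivFunOnFinite.symm (fun j => (e j : ℕ)) with htoF
  have toF_apply : ∀ e j, toF e j = (e j : ℕ) := fun e j => rfl
  have toF_inj : Function.Injective toF := by
    intro e e' he
    funext j
    have := DFunLike.congr_fun he j
    rw [toF_apply, toF_apply] at this
    exact Fin.ext this
  set polyOf : ((Fin d → Fin (k+1)) → F) → MvPolynomial (Fin d) F :=
    fun c => ∑ e : Fin d → Fin (k+1), MvPolynomial.monomial (toF e) (c e) with hpolyOf
  set Φ : ((Fin d → Fin (k+1)) → F) →ₗ[F] ({x // x ∈ T} → F) :=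
    { toFun := fun c => fun p => MvPolynomial.eval p.val (polyOf c)
      map_add' := by
        intro c c'
        funext p
        simp only [hpolyOf, Pi.add_apply]
        rw [← map_add]
        congr 1
        rw [← Finset.sum_add_distrib]
        apply Finset.sum_congr rfl
        intro e _
        rw [← map_add]
      map_smul' := by
        intro r c
        funext p
        simp only [hpolyOf, Pi.smul_apply, RingHom.id_apply, smul_eq_mul]
        rw [← MvPolynomial.smul_eval]
        congr 1
        rw [Finset.smul_sum]
        apply Finset.sum_congr rfl
        intro e _
        simp [MvPolynomial.smul_monomial] } with hΦ
  have hnotinj : ¬ Function.Injective Φ := by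
    intro hinj
    have h1 := LinearMap.finrank_le_finrank_of_injective hinj
    rw [Module.finrank_fintype_fun_eq_card, Module.finrank_fintype_fun_eq_card] at h1
    rw [Fintype.card_pi] at h1
    simp only [Fintype.card_fin, Finset.prod_const, Finset.card_univ, Fintype.card_fin] at h1
    rw [Fintype.card_coe] at h1
    have hTcard : T.card = J.ncard := (Set.ncard_eq_toFinset_card _ hJ).symm
    omega
  obtain ⟨c1, c2, heq, hne⟩ := Function.not_injective_iff.mp hnotinj
  set c := c1 - c2 with hc
  have hc0 : c ≠ 0 := sub_ne_zero_of_ne hne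
  have hΦc : Φ c = 0 := by rw [hc, map_sub, heq, sub_self]
  refine ⟨polyOf c, ?_, ?_, ?_⟩
  · obtain ⟨e₀, he₀⟩ := Function.ne_iff.mp hc0
    intro hzero
    apply he₀
    have : MvPolynomial.coeff (toF e₀) (polyOf c) = c e₀ := by
      rw [hpolyOf]
      simp only
      rw [MvPolynomial.coeff_sum]
      rw [Finset.sum_eq_single e₀]
      · rw [MvPolynomial.coeff_monomial, if_pos rfl]
      · intro e _ hne'
        rw [MvPolynomial.coeff_monomial, if_neg (fun hc' => hne' (toF_inj hc'))]
      · intro hnot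
        exact absurd (Finset.mem_univ e₀) hnot
    rw [hzero, MvPolynomial.coeff_zero] at this
    exact this.symm
  · apply le_trans (MvPolynomial.totalDegree_finset_sum _ _)
    apply Finset.sup_le
    intro e _
    apply le_trans (MvPolynomial.totalDegree_monomial_le _ _)
    rw [Finsupp.sum_fintype _ _ (fun _ => rfl)]
    calc ∑ j, toF e j ≤ ∑ _j : Fin d, k := by
          apply Finset.sum_le_sum
          intro j _
          rw [toF_apply]
          exact Nat.lt_succ_iff.mp (e j).isLt
      _ = d * k := by simp [Finset.sum_const, Finset.card_univ, mul_comm]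
  · intro x hx
    have hxT : x ∈ T := by rw [hT, Set.Finite.mem_toFinset]; exact hx
    exact congrFun hΦc ⟨x, hxT⟩

def Jset (L : Finset (Set (Fin d → F))) : Set (Fin d → F) :=
  {P | ∃ v : Fin d → (Fin d → F), LinearIndependent F v ∧ ∀ i, lineThrough P (v i) ∈ L}

lemma mem_lineThrough_self (P v : Fin d → F) : P ∈ lineThrough P v :=
  ⟨0, by simp⟩

lemma lineThrough_eq_of_mem {a v x y : Fin d → F} (hv : v ≠ 0)
    (hx : x ∈ lineThrough a v) (hy : y ∈ lineThrough a v) (hxy : x ≠ y) :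
    lineThrough a v = lineThrough x (y - x) := by
  obtain ⟨t₁, rfl⟩ := hx
  obtain ⟨t₂, rfl⟩ := hy
  have htne : t₂ - t₁ ≠ 0 := by
    intro hc
    apply hxy
    have : t₂ = t₁ := by linear_combination hc
    rw [this]
  have hyx : (a + t₂ • v) - (a + t₁ • v) = (t₂ - t₁) • v := by
    funext j
    simp [sub_smul]
    ring
  ext z
  constructor
  · rintro ⟨u, rfl⟩
    refine ⟨(u - t₁) / (t₂ - t₁), ?_⟩
    rw [hyx, smul_smul, div_mul_cancel₀ _ htne]
    funext j
    simp [sub_smul]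
  · rintro ⟨r, rfl⟩
    refine ⟨t₁ + r * (t₂ - t₁), ?_⟩
    rw [hyx, smul_smul]
    funext j
    simp [add_smul, sub_smul, mul_sub]
    ring

lemma line_inter_subsingleton {s t : Set (Fin d → F)} (hs : IsLine s) (ht : IsLine t)
    (hst : s ≠ t) : (s ∩ t).Subsingleton := by
  intro x hx y hy
  by_contra hxy
  obtain ⟨a, v, hv, rfl⟩ := hs
  obtain ⟨b, w, hw, rfl⟩ := ht
  have h1 : lineThrough a v = lineThrough x (y - x) :=
    lineThrough_eq_of_mem hv hx.1 hy.1 hxy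
  have h2 : lineThrough b w = lineThrough x (y - x) :=
    lineThrough_eq_of_mem hw hx.2 hy.2 hxy
  exact hst (h1.trans h2.symm)

lemma not_smul_of_indep {v : Fin d → Fin d → F} (hv : LinearIndependent F v)
    {i₀ i₁ : Fin d} (hne : i₀ ≠ i₁) (c : F) : v i₀ ≠ c • v i₁ := by
  intro hc
  have hsum : ∑ i, ((if i = i₀ then (1:F) else 0) + (if i = i₁ then -c else 0)) • v i = 0 := by
    have : ∀ i, ((if i = i₀ then (1:F) else 0) + (if i = i₁ then -c else 0)) • v i
        = (if i = i₀ then v i else 0) + (if i = i₁ then (-c) • v i else 0) := by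
      intro i
      by_cases h0 : i = i₀ <;> by_cases h1 : i = i₁ <;>
        simp [h0, h1, add_smul, ite_smul] <;> first | (exfalso; exact hne (h0 ▸ h1 ▸ rfl)) | rfl
    rw [Finset.sum_congr rfl (fun i _ => this i), Finset.sum_add_distrib,
      Finset.sum_ite_eq' Finset.univ i₀ (fun i => v i),
      Finset.sum_ite_eq' Finset.univ i₁ (fun i => (-c) • v i)]
    simp [hc, neg_smul]
  have := Fintype.linearIndependent_iff.mp hv _ hsum i₀
  simp [hne] at this



lemma Jset_finite (hd : 2 ≤ d) (L : Finset (Set (Fin d → F))) (hL : ∀ l ∈ L, IsLine l) :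
    (Jset L).Finite := by
  classical
  have hsub : Jset L ⊆ ⋃ s ∈ (L : Set (Set (Fin d → F))), ⋃ t ∈ (L : Set (Set (Fin d → F))),
      (if s = t then (∅ : Set (Fin d → F)) else s ∩ t) := by
    intro x hx
    obtain ⟨v, hv, hmem⟩ := hx
    set i₀ : Fin d := ⟨0, by omega⟩ with hi₀
    set i₁ : Fin d := ⟨1, by omega⟩ with hi₁
    have hne01 : i₀ ≠ i₁ := by
      intro hc
      rw [hi₀, hi₁, Fin.mk.injEq] at hc
      omega
    set s := lineThrough x (v i₀) with hs
    set t := lineThrough x (v i₁) with ht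
    have hst : s ≠ t := by
      intro hc
      have hx1 : x + v i₀ ∈ s := ⟨1, by simp⟩
      rw [hc, ht] at hx1
      obtain ⟨c, hcc⟩ := hx1
      have : v i₀ = c • v i₁ := by
        funext j
        have := congrFun hcc j
        simp at this
        simpa using this
      exact not_smul_of_indep hv hne01 c this
    apply Set.mem_biUnion (Finset.mem_coe.mpr (hmem i₀))
    apply Set.mem_biUnion (Finset.mem_coe.mpr (hmem i₁))
    rw [if_neg hst]
    exact ⟨mem_lineThrough_self x (v i₀), mem_lineThrough_self x (v i₁)⟩
  apply Set.Finite.subset _ hsub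
  apply Set.Finite.biUnion L.finite_toSet
  intro s hs
  apply Set.Finite.biUnion L.finite_toSet
  intro t ht
  split
  · exact Set.finite_empty
  · exact Set.Subsingleton.finite
      (line_inter_subsingleton (hL s hs) (hL t ht) (by assumption))

lemma exists_light_line (L : Finset (Set (Fin d → F))) (B : ℕ)
    (hJne : (Jset L).Nonempty) (hfin : (Jset L).Finite)
    (h : MvPolynomial (Fin d) F) (hne : h ≠ 0) (hdeg : h.totalDegree ≤ B)
    (hvan : ∀ x ∈ Jset L, MvPolynomial.eval x h = 0) :
    ∃ l ∈ L, ((Jset L) ∩ l).ncard ≤ B := by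
  classical
  by_contra hcon
  push_neg at hcon
  have hempty := core d B F (Jset L)
    {p : (Fin d → F) × (Fin d → F) | p.2 ≠ 0 ∧ lineThrough p.1 p.2 ∈ L} h hne hdeg hvan
    (by
      rintro x ⟨v, hv, hmem⟩
      exact ⟨v, hv, fun i => ⟨hv.ne_zero i, hmem i⟩⟩)
    (by
      rintro ⟨a, w⟩ ⟨hw, hline⟩
      simp only at hw hline
      obtain ⟨j₀, hj₀⟩ := Function.ne_iff.mp hw
      have hj₀' : w j₀ ≠ 0 := by simpa using hj₀
      set τ : (Fin d → F) → F := fun p => (p j₀ - a j₀) / w j₀ with hτ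
      have hτline : ∀ p ∈ lineThrough a w, p = (fun j => a j + τ p * w j) := by
        rintro p ⟨t, rfl⟩
        have hτt : τ (a + t • w) = t := by
          rw [hτ]
          simp
          field_simp
        rw [hτt]
        funext j
        simp
      have hfin2 : ((Jset L) ∩ lineThrough a w).Finite := hfin.inter_of_left _
      set T := hfin2.toFinset with hT
      set S := T.image τ with hS
      have hcardT : B < T.card := by
        rw [hT, ← Set.ncard_eq_toFinset_card _ hfin2]
        exact hcon _ hline
      have hinjT : Set.InjOn τ T := by
        intro p hp p' hp' hpp
        rw [hT, Finset.mem_coe, Set.Finite.mem_toFinset] at hp hp'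
        rw [hτline p hp.2, hτline p' hp'.2, hpp]
      refine ⟨S, ?_, ?_⟩
      · rw [hS, Finset.card_image_of_injOn hinjT]
        exact hcardT
      · intro t ht
        obtain ⟨p, hp, rfl⟩ := Finset.mem_image.mp ht
        rw [hT, Set.Finite.mem_toFinset] at hp
        have := hτline p hp.2
        simp only
        rw [← this]
        exact hp.1)
  exact absurd hempty (Set.nonempty_iff_ne_empty.mp hJne)

lemma prune (hd : 2 ≤ d) (L₀ : Finset (Set (Fin d → F))) (hL₀ : ∀ l ∈ L₀, IsLine l) (B : ℕ)
    (hlight : ∀ L ⊆ L₀, (Jset L).Nonempty → ∃ l ∈ L, ((Jset L) ∩ l).ncard ≤ B) :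
    ∀ L, L ⊆ L₀ → (Jset L).ncard ≤ L.card * B := by
  classical
  intro L
  induction L using Finset.strongInduction with
  | _ L IH =>
  intro hsub
  rcases Set.eq_empty_or_nonempty (Jset L) with hJ | hJ
  · simp [hJ]
  · obtain ⟨ℓ, hℓL, hℓ⟩ := hlight L hsub hJ
    set L' := L.erase ℓ with hL'
    have hsub' : L' ⊆ L₀ := (Finset.erase_subset _ _).trans hsub
    have hLfin : (Jset L).Finite := Jset_finite hd L (fun l hl => hL₀ l (hsub hl))
    have hL'fin : (Jset L').Finite := Jset_finite hd L' (fun l hl => hL₀ l (hsub' hl))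
    have hsubset : Jset L ⊆ Jset L' ∪ ((Jset L) ∩ ℓ) := by
      intro x hx
      by_cases hxl : x ∈ ℓ
      · exact Or.inr ⟨hx, hxl⟩
      · left
        obtain ⟨v, hv, hmem⟩ := hx
        refine ⟨v, hv, fun i => ?_⟩
        rw [hL', Finset.mem_erase]
        refine ⟨?_, hmem i⟩
        intro hc
        exact hxl (hc ▸ mem_lineThrough_self x (v i))
    have hcard1 : (Jset L).ncard ≤ (Jset L' ∪ ((Jset L) ∩ ℓ)).ncard :=
      Set.ncard_le_ncard hsubset (hL'fin.union (hLfin.inter_of_left _))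
    have hcard2 : (Jset L' ∪ ((Jset L) ∩ ℓ)).ncard ≤ (Jset L').ncard + ((Jset L) ∩ ℓ).ncard :=
      Set.ncard_union_le _ _
    have hIH : (Jset L').ncard ≤ L'.card * B :=
      IH L' (Finset.erase_ssubset hℓL) hsub'
    have hcard3 : L'.card = L.card - 1 := Finset.card_erase_of_mem hℓL
    have hLpos : 1 ≤ L.card := Finset.card_pos.mpr ⟨ℓ, hℓL⟩
    calc (Jset L).ncard ≤ (Jset L').ncard + ((Jset L) ∩ ℓ).ncard := le_trans hcard1 hcard2
      _ ≤ (L.card - 1) * B + B := by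
          apply Nat.add_le_add
          · rw [← hcard3]; exact hIH
          · exact hℓ
      _ ≤ L.card * B := by
          have h1 : L.card - 1 + 1 = L.card := by omega
          apply le_of_eq
          calc (L.card - 1) * B + B = ((L.card - 1) + 1) * B := by ring
            _ = L.card * B := by rw [h1]

/-- Joints theorem over an arbitrary field: `N` lines in `F^d` form at most
`C(d) * N^(d/(d-1))` joints. -/
theorem stmt6 (d : ℕ) (hd : 2 ≤ d) :
    ∃ C : ℝ, 0 < C ∧
      ∀ (F : Type) [Field F] (L : Finset (Set (Fin d → F))),
        (∀ l ∈ L, IsLine l) →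
        ∀ J : Set (Fin d → F),
          J = {P | ∃ v : Fin d → (Fin d → F),
                LinearIndependent F v ∧ ∀ i, lineThrough P (v i) ∈ L} →
          J.Finite ∧ (J.ncard : ℝ) ≤ C * (L.card : ℝ) ^ ((d : ℝ) / ((d : ℝ) - 1)) := by
  have hd0 : (0:ℝ) < d := by
    have : 0 < d := by omega
    exact_mod_cast this
  have hd2 : (2:ℝ) ≤ (d:ℝ) := by exact_mod_cast hd
  refine ⟨(d:ℝ)^2, by positivity, ?_⟩
  intro F _ L hL J hJdef
  have hJset : J = Jset L := hJdef
  have hfin : (Jset L).Finite := Jset_finite hd L hL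
  refine ⟨hJset ▸ hfin, ?_⟩
  rw [hJset]
  set m := (Jset L).ncard with hm
  set N := L.card with hN
  set θ : ℝ := (d:ℝ) / ((d:ℝ) - 1) with hθ
  have hNθ : (0:ℝ) ≤ (N:ℝ) ^ θ := Real.rpow_nonneg (Nat.cast_nonneg _) _
  by_cases hm0 : m = 0
  · rw [hm0]
    push_cast
    positivity
  · have hm1 : 1 ≤ m := Nat.one_le_iff_ne_zero.mpr hm0
    have hmpos : (0:ℝ) < m := by exact_mod_cast hm1
    set K : ℕ := ⌊(m:ℝ) ^ ((1:ℝ)/d)⌋₊ with hK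
    have hrnn : (0:ℝ) ≤ (m:ℝ) ^ ((1:ℝ)/d) := Real.rpow_nonneg (le_of_lt hmpos) _
    have hfl : ((m:ℝ) ^ ((1:ℝ)/d)) < K + 1 := Nat.lt_floor_add_one _
    have hKle : (K:ℝ) ≤ (m:ℝ) ^ ((1:ℝ)/d) := Nat.floor_le hrnn
    have hmlt : m < (K+1)^d := by
      have h1 : ((m:ℝ) ^ ((1:ℝ)/d)) ^ (d:ℕ) < ((K:ℝ)+1) ^ (d:ℕ) :=
        pow_lt_pow_left₀ hfl hrnn (by omega)
      have h2 : ((m:ℝ) ^ ((1:ℝ)/d)) ^ (d:ℕ) = m := by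
        rw [← Real.rpow_natCast ((m:ℝ) ^ ((1:ℝ)/d)) d, ← Real.rpow_mul (le_of_lt hmpos),
          one_div, inv_mul_cancel₀ (ne_of_gt hd0), Real.rpow_one]
      rw [h2] at h1
      have h3 : (m:ℝ) < ((K+1:ℕ):ℝ) ^ (d:ℕ) := by push_cast; push_cast at h1; linarith
      exact_mod_cast h3
    have hprune : m ≤ N * (d * K) := by
      apply prune hd L hL (d*K) ?_ L (subset_refl L)
      intro L' hsub' hne'
      have hfin' : (Jset L').Finite := Jset_finite hd L' (fun l hl => hL l (hsub' hl))
      have hmono : (Jset L') ⊆ Jset L := by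
        rintro x ⟨v, hv, hmem⟩
        exact ⟨v, hv, fun i => hsub' (hmem i)⟩
      have hcard' : (Jset L').ncard < (K+1)^d :=
        lt_of_le_of_lt (Set.ncard_le_ncard hmono hfin) hmlt
      obtain ⟨h, hne, hdeg, hvan⟩ := exists_low_degree (Jset L') hfin' K hcard'
      exact exists_light_line L' (d*K) hne' hfin' h hne hdeg hvan
    have hreal1 : (m:ℝ) ≤ (d:ℝ) * N * (m:ℝ) ^ ((1:ℝ)/d) := by
      calc (m:ℝ) ≤ ((N * (d * K) : ℕ) : ℝ) := by exact_mod_cast hprune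
        _ = (d:ℝ) * N * K := by push_cast; ring
        _ ≤ (d:ℝ) * N * (m:ℝ) ^ ((1:ℝ)/d) := by
            apply mul_le_mul_of_nonneg_left hKle
            positivity
    have hsplit : (m:ℝ) = (m:ℝ)^(1 - (1:ℝ)/d) * (m:ℝ)^((1:ℝ)/d) := by
      rw [← Real.rpow_add hmpos]
      norm_num
    have hstep : (m:ℝ)^(1-(1:ℝ)/d) ≤ (d:ℝ)*N := by
      have hp : (0:ℝ) < (m:ℝ)^((1:ℝ)/d) := Real.rpow_pos_of_pos hmpos _
      have h5 : (m:ℝ)^(1-(1:ℝ)/d) * (m:ℝ)^((1:ℝ)/d) ≤ ((d:ℝ)*N) * (m:ℝ)^((1:ℝ)/d) := by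
        rw [← hsplit]
        exact hreal1
      exact le_of_mul_le_mul_right h5 hp
    have hθpos : (0:ℝ) < θ := by
      rw [hθ]
      apply div_pos hd0
      linarith
    have hexp : (1 - (1:ℝ)/d) * θ = 1 := by
      have h2 : (d:ℝ) - 1 ≠ 0 := by linarith
      rw [hθ]
      field_simp
    have hmain : (m:ℝ) ≤ ((d:ℝ)*N)^θ := by
      have h3 : ((m:ℝ)^(1-(1:ℝ)/d))^θ ≤ ((d:ℝ)*N)^θ :=
        Real.rpow_le_rpow (Real.rpow_nonneg (le_of_lt hmpos) _) hstep (le_of_lt hθpos)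
      have h4 : ((m:ℝ)^(1-(1:ℝ)/d))^θ = (m:ℝ) := by
        rw [← Real.rpow_mul (le_of_lt hmpos), hexp, Real.rpow_one]
      rw [h4] at h3
      exact h3
    have hsplit2 : ((d:ℝ)*N)^θ = (d:ℝ)^θ * (N:ℝ)^θ :=
      Real.mul_rpow (le_of_lt hd0) (Nat.cast_nonneg _)
    have hθle2 : θ ≤ 2 := by
      rw [hθ, div_le_iff₀ (by linarith : (0:ℝ) < (d:ℝ)-1)]
      linarith
    have hdθ : (d:ℝ)^θ ≤ (d:ℝ)^2 := by
      have := Real.rpow_le_rpow_of_exponent_le (by linarith : (1:ℝ) ≤ (d:ℝ)) hθle2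
      rw [show ((2:ℝ)) = ((2:ℕ):ℝ) by norm_num, Real.rpow_natCast] at this
      exact this
    calc (m:ℝ) ≤ ((d:ℝ)*N)^θ := hmain
      _ = (d:ℝ)^θ * (N:ℝ)^θ := hsplit2
      _ ≤ (d:ℝ)^2 * (N:ℝ)^θ := mul_le_mul_of_nonneg_right hdθ hNθ

end JointsProof
end

section
/- The joints-with-multiplicity theorem implies Carbery's conjecture: if for every finite sequence of N lines in F^d one has Σ_P M(P)^(1/(d-1)) ≤ C(d) N^(d/(d-1)), then for any d families L_1,...,L_d of lines with |L_i| = N_i > 0 one has Σ_P μ(P)^(1/(d-1)) ≤ C'(d) (Π_i N_i)^(1/(d-1)). -/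
noncomputable def jointMult {F : Type} [Field F] {d N : ℕ}
    (l : Fin N → Set (Fin d → F)) (P : Fin d → F) : ℕ :=
  Set.ncard {ι : Fin d → Fin N |
    ∃ v : Fin d → (Fin d → F), LinearIndependent F v ∧
      ∀ j, l (ι j) = lineThrough P (v j)}

noncomputable def multijointMult {F : Type} [Field F] {d : ℕ}
    (L : Fin d → Finset (Set (Fin d → F))) (P : Fin d → F) : ℕ :=
  Set.ncard {l : Fin d → Set (Fin d → F) |
    ∃ v : Fin d → (Fin d → F), LinearIndependent F v ∧
      ∀ i, l i ∈ L i ∧ l i = lineThrough P (v i)}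

/-- The joints-with-multiplicity theorem implies Carbery's conjecture. -/
theorem stmt10 (d : ℕ) (hd : 2 ≤ d) (C : ℝ) (hC : 0 < C)
    (hjoints : ∀ (F : Type) [Field F] (N : ℕ) (l : Fin N → Set (Fin d → F)),
      (∀ i, IsLine (l i)) →
      ∀ s : Finset (Fin d → F),
        ∑ P ∈ s, (jointMult l P : ℝ) ^ ((1 : ℝ) / ((d : ℝ) - 1)) ≤
          C * (N : ℝ) ^ ((d : ℝ) / ((d : ℝ) - 1))) :
    ∃ C' : ℝ, 0 < C' ∧
      ∀ (F : Type) [Field F] (L : Fin d → Finset (Set (Fin d → F))),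
        (∀ i, ∀ l ∈ L i, IsLine l) → (∀ i, (L i).Nonempty) →
        ∀ s : Finset (Fin d → F),
          ∑ P ∈ s, (multijointMult L P : ℝ) ^ ((1 : ℝ) / ((d : ℝ) - 1)) ≤
            C' * (∏ i, ((L i).card : ℝ)) ^ ((1 : ℝ) / ((d : ℝ) - 1)) := by
  classical
  have hd2 : (2:ℝ) ≤ (d:ℝ) := by exact_mod_cast hd
  have hdpos : (0:ℝ) < (d:ℝ) - 1 := by linarith
  set α : ℝ := 1 / ((d:ℝ) - 1) with hα
  set β : ℝ := (d:ℝ) / ((d:ℝ) - 1) with hβ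
  have hαpos : 0 < α := by positivity
  have hdRpos : (0:ℝ) < (d:ℝ) := by linarith
  refine ⟨C * (d:ℝ) ^ β, mul_pos hC (Real.rpow_pos_of_pos hdRpos β), ?_⟩
  intro F _ L hL hne s
  set N : Fin d → ℕ := fun i => (L i).card with hN
  set Pr : ℕ := ∏ i, N i with hPr
  have hNpos : ∀ i, 0 < N i := fun i => Finset.card_pos.mpr (hne i)
  have hPrpos : 0 < Pr := Finset.prod_pos (fun i _ => hNpos i)
  set k : Fin d → ℕ := fun i => ∏ j ∈ Finset.univ.erase i, N j with hk
  have hkN : ∀ i, k i * N i = Pr := fun i =>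
    Finset.prod_erase_mul _ _ (Finset.mem_univ i)
  -- big index type
  let I : Type := Σ i : Fin d, (↥(L i) × Fin (k i))
  let e : Fin (Fintype.card I) ≃ I := (Fintype.equivFin I).symm
  let l0 : Fin (Fintype.card I) → Set (Fin d → F) := fun n => ((e n).2.1 : Set (Fin d → F))
  have hlines : ∀ n, IsLine (l0 n) := fun n => hL _ _ (e n).2.1.2
  have hcardI : Fintype.card I = d * Pr := by
    have h0 : Fintype.card I = ∑ i : Fin d, Fintype.card (↥(L i) × Fin (k i)) :=
      Fintype.card_sigma
    have h1 : ∀ i : Fin d, Fintype.card (↥(L i) × Fin (k i)) = Pr := by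
      intro i
      rw [Fintype.card_prod, Fintype.card_coe, Fintype.card_fin, mul_comm]
      exact hkN i
    rw [h0, Finset.sum_congr rfl (fun i _ => h1 i), Finset.sum_const, Finset.card_univ,
      Fintype.card_fin, smul_eq_mul]
  have hprodk : ∏ i, k i = Pr ^ (d - 1) := by
    have h1 : (∏ i, k i) * Pr = Pr ^ (d - 1) * Pr := by
      calc (∏ i, k i) * Pr = ∏ i, (k i * N i) := by
            rw [hPr, Finset.prod_mul_distrib]
        _ = ∏ _i : Fin d, Pr := Finset.prod_congr rfl (fun i _ => hkN i)
        _ = Pr ^ d := by simp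
        _ = Pr ^ (d - 1) * Pr := by
            rw [← pow_succ, Nat.sub_add_cancel (by omega : 1 ≤ d)]
    exact Nat.eq_of_mul_eq_mul_right hPrpos h1
  -- key counting inequality
  have key : ∀ P : Fin d → F, multijointMult L P * Pr ^ (d - 1) ≤ jointMult l0 P := by
    intro P
    set A := {l : Fin d → Set (Fin d → F) |
      ∃ v : Fin d → (Fin d → F), LinearIndependent F v ∧
        ∀ i, l i ∈ L i ∧ l i = lineThrough P (v i)} with hA
    set B := {ι : Fin d → Fin (Fintype.card I) |
      ∃ v : Fin d → (Fin d → F), LinearIndependent F v ∧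
        ∀ j, l0 (ι j) = lineThrough P (v j)} with hB
    have hmm : multijointMult L P = Nat.card A := (Nat.card_coe_set_eq _).symm
    have hjm : jointMult l0 P = Nat.card B := (Nat.card_coe_set_eq _).symm
    -- build the injection
    let f : ↥A × (∀ i, Fin (k i)) → ↥B := fun x =>
      ⟨fun j => e.symm ⟨j, ⟨⟨x.1.1 j, (x.1.2.choose_spec.2 j).1⟩, x.2 j⟩⟩, by
        refine ⟨x.1.2.choose, x.1.2.choose_spec.1, fun j => ?_⟩
        have : l0 (e.symm ⟨j, ⟨⟨x.1.1 j, (x.1.2.choose_spec.2 j).1⟩, x.2 j⟩⟩) = x.1.1 j := by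
          show (((e (e.symm _)).2.1 : Set (Fin d → F))) = _
          rw [Equiv.apply_symm_apply]
        rw [this]
        exact (x.1.2.choose_spec.2 j).2⟩
    have hfinj : Function.Injective f := by
      rintro ⟨⟨l1, h1⟩, c1⟩ ⟨⟨l2, h2⟩, c2⟩ heq
      have heq' := congrArg Subtype.val heq
      simp only [f] at heq'
      have hcomp : ∀ j : Fin d,
          (⟨j, ⟨⟨l1 j, (h1.choose_spec.2 j).1⟩, c1 j⟩⟩ : I) =
          ⟨j, ⟨⟨l2 j, (h2.choose_spec.2 j).1⟩, c2 j⟩⟩ := by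
        intro j
        have := congrFun heq' j
        exact e.symm.injective this
      have hl12 : l1 = l2 := by
        funext j
        have := hcomp j
        have h2' := (Sigma.mk.inj_iff.mp this).2
        have h3 := eq_of_heq h2'
        exact congrArg Subtype.val (congrArg Prod.fst h3)
      have hc12 : c1 = c2 := by
        funext j
        have := hcomp j
        have h2' := (Sigma.mk.inj_iff.mp this).2
        have h3 := eq_of_heq h2'
        exact congrArg Prod.snd h3
      subst hl12
      subst hc12
      rfl
    have hcard : Nat.card (↥A × (∀ i, Fin (k i))) ≤ Nat.card B :=
      Nat.card_le_card_of_injective f hfinj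
    have hcard' : Nat.card (↥A × (∀ i, Fin (k i))) = Nat.card A * ∏ i, k i := by
      rw [Nat.card_prod, Nat.card_pi]
      simp
    rw [hmm, hjm, ← hprodk, ← hcard']
    exact hcard
  -- pointwise real inequality
  have hPrR : (0:ℝ) < (Pr:ℝ) := by exact_mod_cast hPrpos
  have pt : ∀ P : Fin d → F,
      (multijointMult L P : ℝ) ^ α * (Pr:ℝ) ≤ (jointMult l0 P : ℝ) ^ α := by
    intro P
    have h1 : ((multijointMult L P * Pr ^ (d - 1) : ℕ) : ℝ) ≤ (jointMult l0 P : ℝ) := by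
      exact_mod_cast key P
    have h2 := Real.rpow_le_rpow (by positivity) h1 hαpos.le
    calc (multijointMult L P : ℝ) ^ α * (Pr:ℝ)
        = ((multijointMult L P * Pr ^ (d - 1) : ℕ) : ℝ) ^ α := by
          push_cast
          rw [Real.mul_rpow (by positivity) (by positivity)]
          congr 1
          rw [← Real.rpow_natCast ((Pr:ℝ)) (d-1), ← Real.rpow_mul hPrR.le]
          have : ((d - 1 : ℕ) : ℝ) * α = 1 := by
            rw [Nat.cast_sub (by omega : 1 ≤ d), Nat.cast_one, hα]
            field_simp
          rw [this, Real.rpow_one]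
      _ ≤ (jointMult l0 P : ℝ) ^ α := h2
  -- sum up
  have hsum := hjoints F (Fintype.card I) l0 hlines s
  have hsum' : (∑ P ∈ s, (multijointMult L P : ℝ) ^ α) * (Pr:ℝ) ≤
      C * ((Fintype.card I : ℕ) : ℝ) ^ β := by
    rw [Finset.sum_mul]
    exact le_trans (Finset.sum_le_sum (fun P _ => pt P)) hsum
  have hrhs : C * ((Fintype.card I : ℕ) : ℝ) ^ β = (C * (d:ℝ) ^ β * (Pr:ℝ) ^ α) * (Pr:ℝ) := by
    rw [hcardI]
    push_cast
    rw [Real.mul_rpow hdRpos.le hPrR.le]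
    have hβ1 : β = 1 + α := by
      rw [hβ, hα]
      field_simp
      ring
    have : (Pr:ℝ) ^ β = (Pr:ℝ) * (Pr:ℝ) ^ α := by
      rw [hβ1, Real.rpow_add hPrR, Real.rpow_one]
    rw [this]
    ring
  rw [hrhs] at hsum'
  have hfinal : ∑ P ∈ s, (multijointMult L P : ℝ) ^ α ≤ C * (d:ℝ) ^ β * (Pr:ℝ) ^ α :=
    le_of_mul_le_mul_right hsum' hPrR
  have hPrcast : (∏ i, ((L i).card : ℝ)) = (Pr:ℝ) := by
    rw [hPr, hN]
    push_cast
    rfl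
  rw [hPrcast]
  exact hfinal
end

section
/- Let L = (l_1,...,l_N) be a finite sequence of lines in F^d and let P be a point with M(P) > 0 (some d lines of L form a joint at P). Then there exists a complete flag of linear subspaces V_1(P) ⊆ V_2(P) ⊆ ··· ⊆ V_d(P) ⊆ V_{d+1}(P) = F^d with dim V_j(P) = j - 1 such that: (b) for each 1 ≤ j ≤ d, the number of indices i with P ∈ l_i and l_i not parallel to V_j(P) is at most C(d) * r_j(P,L) (and at least r_j(P,L)); and (c) for each 1 ≤ j ≤ d and every (j-1)-dimensional subspace V of V_{j+1}(P), the number of lines through P parallel to V is at most the number of lines through P parallel to V_j(P). -/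
/-- A line is parallel to a linear subspace `V` if its direction lies in `V`. -/
def LineParallel {F : Type} [Field F] {d : ℕ} (s : Set (Fin d → F))
    (V : Submodule F (Fin d → F)) : Prop :=
  ∃ a v : Fin d → F, v ≠ 0 ∧ s = {x | ∃ t : F, x = a + t • v} ∧ v ∈ V

/-- The `j`-th minimum `r_j(P, L)`: the minimum over `(j-1)`-dimensional linear
subspaces `V` of the number of indices `i` with `P ∈ l_i` and `l_i` not
parallel to `V`. -/
noncomputable def jthMin {F : Type} [Field F] {d N : ℕ}
    (l : Fin N → Set (Fin d → F)) (P : Fin d → F) (j : ℕ) : ℕ :=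
  sInf {k : ℕ | ∃ V : Submodule F (Fin d → F), Module.finrank F V = j - 1 ∧
    k = Set.ncard {i : Fin N | P ∈ l i ∧ ¬ LineParallel (l i) V}}

section Aux

variable {F : Type} [Field F] {d N : ℕ}

lemma lineParallel_mono {s : Set (Fin d → F)} {U V : Submodule F (Fin d → F)}
    (hUV : U ≤ V) (h : LineParallel s U) : LineParallel s V := by
  obtain ⟨a, v, hv, hs, hm⟩ := h
  exact ⟨a, v, hv, hs, hUV hm⟩

lemma lineParallel_inf {s : Set (Fin d → F)} {U V : Submodule F (Fin d → F)}
    (hU : LineParallel s U) (hV : LineParallel s V) : LineParallel s (U ⊓ V) := by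
  obtain ⟨a1, v1, hv1, hs1, hm1⟩ := hU
  obtain ⟨a2, v2, hv2, hs2, hm2⟩ := hV
  have ha1 : a1 ∈ s := by rw [hs1]; exact ⟨0, by simp⟩
  have ha1v : a1 + v1 ∈ s := by rw [hs1]; exact ⟨1, by simp⟩
  rw [hs2] at ha1 ha1v
  obtain ⟨t0, ht0⟩ := ha1
  obtain ⟨t1, ht1⟩ := ha1v
  have h3 : v1 = (t1 - t0) • v2 := by
    rw [sub_smul]
    rw [ht0] at ht1
    have h4 : a2 + (t0 • v2 + v1) = a2 + t1 • v2 := by rw [← add_assoc]; exact ht1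
    have h5 := add_left_cancel h4
    rw [eq_sub_iff_add_eq, add_comm]
    exact h5
  refine ⟨a1, v1, hv1, hs1, hm1, ?_⟩
  rw [h3]; exact V.smul_mem _ hm2

lemma lineParallel_top {s : Set (Fin d → F)} (h : IsLine s) :
    LineParallel s (⊤ : Submodule F (Fin d → F)) := by
  obtain ⟨a, v, hv, hs⟩ := h
  exact ⟨a, v, hv, hs, trivial⟩

lemma exists_step (U W : Submodule F (Fin d → F)) (hWU : W ≤ U)
    (h : Module.finrank F W < Module.finrank F U) :
    ∃ W' : Submodule F (Fin d → F), W ≤ W' ∧ W' ≤ U ∧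
      Module.finrank F W' = Module.finrank F W + 1 := by
  have hlt : W < U := lt_of_le_of_ne hWU (by rintro rfl; exact lt_irrefl _ h)
  obtain ⟨v, hvU, hvW⟩ := SetLike.exists_of_lt hlt
  have hv0 : v ≠ 0 := fun hv => hvW (hv ▸ W.zero_mem)
  refine ⟨W ⊔ F ∙ v, le_sup_left,
    sup_le hWU ((Submodule.span_singleton_le_iff_mem v U).mpr hvU), ?_⟩
  have hdisj : W ⊓ (F ∙ v) = ⊥ := by
    rw [eq_bot_iff]
    rintro x hx
    obtain ⟨hxW, hxv⟩ := Submodule.mem_inf.mp hx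
    obtain ⟨c, rfl⟩ := Submodule.mem_span_singleton.mp hxv
    rcases eq_or_ne c 0 with rfl | hc
    · simp
    · exact absurd (by simpa [smul_smul, inv_mul_cancel₀ hc] using W.smul_mem c⁻¹ hxW) hvW
  have hkey := Submodule.finrank_sup_add_finrank_inf_eq W (F ∙ v)
  rw [hdisj, finrank_bot, finrank_span_singleton hv0] at hkey
  omega

lemma exists_btw' (U : Submodule F (Fin d → F)) (k : ℕ) :
    ∀ W : Submodule F (Fin d → F), W ≤ U →
      Module.finrank F W + k ≤ Module.finrank F U →
      ∃ W' : Submodule F (Fin d → F), W ≤ W' ∧ W' ≤ U ∧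
        Module.finrank F W' = Module.finrank F W + k := by
  induction k with
  | zero => exact fun W hWU _ => ⟨W, le_rfl, hWU, by omega⟩
  | succ k ih =>
    intro W hWU hk
    obtain ⟨W1, hWW1, hW1U, hW1⟩ := exists_step U W hWU (by omega)
    obtain ⟨W', h1, h2, h3⟩ := ih W1 hW1U (by omega)
    exact ⟨W', le_trans hWW1 h1, h2, by omega⟩

lemma exists_btw {U W : Submodule F (Fin d → F)} {m : ℕ} (hWU : W ≤ U)
    (h1 : Module.finrank F W ≤ m) (h2 : m ≤ Module.finrank F U) :
    ∃ W' : Submodule F (Fin d → F), W ≤ W' ∧ W' ≤ U ∧ Module.finrank F W' = m := by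
  obtain ⟨W', a, b, c⟩ := exists_btw' U (m - Module.finrank F W) W hWU (by omega)
  exact ⟨W', a, b, by omega⟩

lemma exists_finrank (U : Submodule F (Fin d → F)) {m : ℕ} (h : m ≤ Module.finrank F U) :
    ∃ W : Submodule F (Fin d → F), W ≤ U ∧ Module.finrank F W = m := by
  obtain ⟨W, _, b, c⟩ := exists_btw (bot_le : (⊥ : Submodule F (Fin d → F)) ≤ U)
    (by rw [finrank_bot]; omega) h
  exact ⟨W, b, c⟩

/-- number of lines of `l` through `P` parallel to `V`. -/
noncomputable def parCount (l : Fin N → Set (Fin d → F)) (P : Fin d → F)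
    (V : Submodule F (Fin d → F)) : ℕ :=
  Set.ncard {i : Fin N | P ∈ l i ∧ LineParallel (l i) V}

/-- number of lines of `l` through `P` not parallel to `V`. -/
noncomputable def nparCount (l : Fin N → Set (Fin d → F)) (P : Fin d → F)
    (V : Submodule F (Fin d → F)) : ℕ :=
  Set.ncard {i : Fin N | P ∈ l i ∧ ¬ LineParallel (l i) V}

lemma par_add_npar (l : Fin N → Set (Fin d → F)) (P : Fin d → F)
    (V : Submodule F (Fin d → F)) :
    parCount l P V + nparCount l P V = Set.ncard {i : Fin N | P ∈ l i} := by
  rw [parCount, nparCount,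
    ← Set.ncard_union_eq (Set.disjoint_left.mpr (fun i h1 h2 => h2.2 h1.2))
      (Set.toFinite _) (Set.toFinite _)]
  congr 1
  ext i
  simp only [Set.mem_setOf_eq, Set.mem_union]
  tauto

lemma npar_mono (l : Fin N → Set (Fin d → F)) (P : Fin d → F)
    {U V : Submodule F (Fin d → F)} (h : U ≤ V) :
    nparCount l P V ≤ nparCount l P U := by
  apply Set.ncard_le_ncard _ (Set.toFinite _)
  rintro i ⟨hi, hni⟩
  exact ⟨hi, fun hp => hni (lineParallel_mono h hp)⟩

lemma npar_inf (l : Fin N → Set (Fin d → F)) (P : Fin d → F)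
    (U V : Submodule F (Fin d → F)) :
    nparCount l P (U ⊓ V) ≤ nparCount l P U + nparCount l P V := by
  refine le_trans (Set.ncard_le_ncard ?_ (Set.toFinite _)) (Set.ncard_union_le _ _)
  rintro i ⟨hi, hni⟩
  by_cases hU : LineParallel (l i) U
  · by_cases hV : LineParallel (l i) V
    · exact absurd (lineParallel_inf hU hV) hni
    · exact Or.inr ⟨hi, hV⟩
  · exact Or.inl ⟨hi, hU⟩

lemma npar_top (l : Fin N → Set (Fin d → F)) (P : Fin d → F)
    (hl : ∀ i, IsLine (l i)) : nparCount l P (⊤ : Submodule F (Fin d → F)) = 0 := by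
  have : {i : Fin N | P ∈ l i ∧ ¬ LineParallel (l i) (⊤ : Submodule F (Fin d → F))} = ∅ := by
    ext i
    simp only [Set.mem_setOf_eq, Set.mem_empty_iff_false, iff_false, not_and, not_not]
    exact fun _ => lineParallel_top (hl i)
  rw [nparCount, this, Set.ncard_empty]

lemma exists_max_par (l : Fin N → Set (Fin d → F)) (P : Fin d → F)
    (U : Submodule F (Fin d → F)) {m : ℕ} (hm : m ≤ Module.finrank F U) :
    ∃ V0 : Submodule F (Fin d → F), V0 ≤ U ∧ Module.finrank F V0 = m ∧
      ∀ W : Submodule F (Fin d → F), W ≤ U → Module.finrank F W = m →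
        parCount l P W ≤ parCount l P V0 := by
  set S : Set ℕ := {n | ∃ W : Submodule F (Fin d → F),
    W ≤ U ∧ Module.finrank F W = m ∧ n = parCount l P W} with hS
  have hSne : S.Nonempty := by
    obtain ⟨W, hWU, hWm⟩ := exists_finrank U hm
    exact ⟨parCount l P W, W, hWU, hWm, rfl⟩
  have hSbdd : BddAbove S := by
    refine ⟨N, ?_⟩
    rintro n ⟨W, _, _, rfl⟩
    calc parCount l P W ≤ (Set.univ : Set (Fin N)).ncard :=
          Set.ncard_le_ncard (Set.subset_univ _) Set.finite_univ
      _ = N := by rw [Set.ncard_univ, Nat.card_eq_fintype_card, Fintype.card_fin]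
  obtain ⟨V0, hV0U, hV0m, hV0⟩ := Nat.sSup_mem hSne hSbdd
  refine ⟨V0, hV0U, hV0m, fun W hWU hWm => ?_⟩
  rw [← hV0]
  exact le_csSup hSbdd ⟨W, hWU, hWm, rfl⟩

end Aux


/-- Existence of a good flag at each joint `P`: a complete flag
`V_1 ⊆ ⋯ ⊆ V_d ⊆ V_{d+1} = F^d` with `dim V_j = j - 1`, such that (b) the
number of lines of `L` through `P` not parallel to `V_j` is between
`r_j(P, L)` and `C(d) r_j(P, L)`, and (c) among `(j-1)`-dimensional subspaces
of `V_{j+1}`, the subspace `V_j` maximizes the number of lines through `P`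
parallel to it. -/
theorem stmt13 (d : ℕ) (hd : 2 ≤ d) :
    ∃ C : ℝ, 0 < C ∧
      ∀ (F : Type) [Field F] (N : ℕ) (l : Fin N → Set (Fin d → F)),
        (∀ i, IsLine (l i)) →
        ∀ P : Fin d → F, 0 < jointMult l P →
          ∃ V : ℕ → Submodule F (Fin d → F),
            (∀ j, 1 ≤ j → j ≤ d → V j ≤ V (j + 1)) ∧
            (∀ j, 1 ≤ j → j ≤ d → Module.finrank F (V j) = j - 1) ∧
            V (d + 1) = ⊤ ∧
            (∀ j, 1 ≤ j → j ≤ d →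
              (jthMin l P j : ℝ) ≤
                  (Set.ncard {i : Fin N | P ∈ l i ∧ ¬ LineParallel (l i) (V j)} : ℝ) ∧
              (Set.ncard {i : Fin N | P ∈ l i ∧ ¬ LineParallel (l i) (V j)} : ℝ) ≤
                  C * (jthMin l P j : ℝ)) ∧
            (∀ j, 1 ≤ j → j ≤ d → ∀ W : Submodule F (Fin d → F),
              W ≤ V (j + 1) → Module.finrank F W = j - 1 →
              Set.ncard {i : Fin N | P ∈ l i ∧ LineParallel (l i) W} ≤
                Set.ncard {i : Fin N | P ∈ l i ∧ LineParallel (l i) (V j)}) := by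
  refine ⟨(d : ℝ), by exact_mod_cast (by omega : 0 < d), ?_⟩
  intro F _ N l hl P _
  have hfintop : Module.finrank F (⊤ : Submodule F (Fin d → F)) = d := by
    rw [finrank_top, Module.finrank_fin_fun]
  -- jthMin facts
  have jthMin_le : ∀ (j : ℕ) (V : Submodule F (Fin d → F)),
      Module.finrank F V = j - 1 → jthMin l P j ≤ nparCount l P V := by
    intro j V hV
    exact Nat.sInf_le ⟨V, hV, rfl⟩
  have jthMin_ex : ∀ j : ℕ, j - 1 ≤ d →
      ∃ V : Submodule F (Fin d → F), Module.finrank F V = j - 1 ∧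
        nparCount l P V = jthMin l P j := by
    intro j hj
    obtain ⟨W, _, hW⟩ := exists_finrank (⊤ : Submodule F (Fin d → F)) (m := j - 1) (by rw [hfintop]; omega)
    have hmem := Nat.sInf_mem (s := {k : ℕ | ∃ V : Submodule F (Fin d → F),
      Module.finrank F V = j - 1 ∧
      k = Set.ncard {i : Fin N | P ∈ l i ∧ ¬ LineParallel (l i) V}})
      ⟨nparCount l P W, W, hW, rfl⟩
    obtain ⟨V, hV1, hV2⟩ := hmem
    exact ⟨V, hV1, hV2.symm⟩
  have jthMin_anti : ∀ j : ℕ, 1 ≤ j → j ≤ d →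
      jthMin l P (j + 1) ≤ jthMin l P j := by
    intro j hj1 hj2
    obtain ⟨U, hU1, hU2⟩ := jthMin_ex j (by omega)
    obtain ⟨U', hUU', _, hU'⟩ := exists_btw (le_top : U ≤ ⊤)
      (by omega : Module.finrank F U ≤ j) (by rw [hfintop]; omega)
    calc jthMin l P (j + 1) ≤ nparCount l P U' :=
          jthMin_le (j + 1) U' (by omega)
      _ ≤ nparCount l P U := npar_mono l P hUU'
      _ = jthMin l P j := hU2
  -- main inductive flag construction
  have key : ∀ k : ℕ, k ≤ d → ∃ V : ℕ → Submodule F (Fin d → F),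
      V (d + 1) = ⊤ ∧
      (∀ j, d + 1 - k ≤ j → j ≤ d + 1 → Module.finrank F (V j) = j - 1 ∧
        nparCount l P (V j) ≤ (d + 1 - j) * jthMin l P j) ∧
      (∀ j, d + 1 - k ≤ j → j ≤ d → V j ≤ V (j + 1) ∧
        ∀ W : Submodule F (Fin d → F), W ≤ V (j + 1) → Module.finrank F W = j - 1 →
          parCount l P W ≤ parCount l P (V j)) := by
    intro k
    induction k with
    | zero =>
      intro _
      refine ⟨fun _ => ⊤, rfl, ?_, ?_⟩
      · intro j hj hj'
        have : j = d + 1 := by omega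
        subst this
        refine ⟨by rw [hfintop]; omega, ?_⟩
        rw [npar_top l P hl]
        omega
      · intro j hj hj'
        omega
    | succ k ih =>
      intro hk1
      obtain ⟨V, hVtop, hA, hB⟩ := ih (by omega)
      set j0 := d - k with hj0def
      have hj0a : 1 ≤ j0 := by omega
      have hj0b : j0 ≤ d := by omega
      have hVj1rank : Module.finrank F (V (j0 + 1)) = j0 := by
        have := (hA (j0 + 1) (by omega) (by omega)).1
        omega
      obtain ⟨U, hUrank, hUnpar⟩ := jthMin_ex j0 (by omega)
      have hWrank : Module.finrank F ↥(U ⊓ V (j0 + 1)) ≤ j0 - 1 := by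
        have := Submodule.finrank_mono (inf_le_left : U ⊓ V (j0 + 1) ≤ U)
        omega
      obtain ⟨W', hWW', hW'le, hW'rank⟩ := exists_btw
        (inf_le_right : U ⊓ V (j0 + 1) ≤ V (j0 + 1)) hWrank (by omega)
      obtain ⟨V0, hV0le, hV0rank, hV0max⟩ := exists_max_par l P (V (j0 + 1))
        (m := j0 - 1) (by omega)
      have h1 : nparCount l P V0 ≤ nparCount l P W' := by
        have hmax := hV0max W' hW'le hW'rank
        have t1 := par_add_npar l P V0
        have t2 := par_add_npar l P W'
        omega
      have h2 : nparCount l P W' ≤ jthMin l P j0 + nparCount l P (V (j0 + 1)) := by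
        calc nparCount l P W' ≤ nparCount l P (U ⊓ V (j0 + 1)) := npar_mono l P hWW'
          _ ≤ nparCount l P U + nparCount l P (V (j0 + 1)) := npar_inf l P _ _
          _ = jthMin l P j0 + nparCount l P (V (j0 + 1)) := by rw [hUnpar]
      have h3 : nparCount l P (V (j0 + 1)) ≤ (d - j0) * jthMin l P j0 := by
        have hb := (hA (j0 + 1) (by omega) (by omega)).2
        have hmono := jthMin_anti j0 hj0a hj0b
        calc nparCount l P (V (j0 + 1)) ≤ (d + 1 - (j0 + 1)) * jthMin l P (j0 + 1) := hb
          _ ≤ (d - j0) * jthMin l P j0 := by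
            rw [show d + 1 - (j0 + 1) = d - j0 by omega]
            exact Nat.mul_le_mul_left _ hmono
      have hV0npar : nparCount l P V0 ≤ (d + 1 - j0) * jthMin l P j0 := by
        rw [show d + 1 - j0 = (d - j0) + 1 from by omega, add_mul, one_mul]
        omega
      refine ⟨Function.update V j0 V0, ?_, ?_, ?_⟩
      · rw [Function.update_of_ne (by omega : d + 1 ≠ j0)]
        exact hVtop
      · intro j hj hj'
        rcases eq_or_ne j j0 with rfl | hne
        · rw [Function.update_self]
          exact ⟨by omega, hV0npar⟩
        · rw [Function.update_of_ne hne]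
          exact hA j (by omega) hj'
      · intro j hj hj'
        rcases eq_or_ne j j0 with rfl | hne
        · rw [Function.update_self, Function.update_of_ne (by omega : j0 + 1 ≠ j0)]
          exact ⟨hV0le, hV0max⟩
        · rw [Function.update_of_ne hne, Function.update_of_ne (by omega : j + 1 ≠ j0)]
          exact hB j (by omega) hj'
  obtain ⟨V, hVtop, hA, hB⟩ := key d le_rfl
  refine ⟨V, ?_, ?_, hVtop, ?_, ?_⟩
  · exact fun j h1 h2 => (hB j (by omega) h2).1
  · exact fun j h1 h2 => (hA j (by omega) (by omega)).1
  · intro j h1 h2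
    have hrank := (hA j (by omega) (by omega)).1
    have hlow : jthMin l P j ≤ nparCount l P (V j) := jthMin_le j (V j) hrank
    have hup : nparCount l P (V j) ≤ d * jthMin l P j := by
      have := (hA j (by omega) (by omega)).2
      calc nparCount l P (V j) ≤ (d + 1 - j) * jthMin l P j := this
        _ ≤ d * jthMin l P j := Nat.mul_le_mul_right _ (by omega)
    constructor
    · exact_mod_cast hlow
    · exact_mod_cast hup
  · intro j h1 h2 W hW hWr
    exact (hB j (by omega) h2).2 W hW hWr
end

section
/- Let Q be a nonzero polynomial in F[x_1,...,x_d], P a point, and l a line through P with direction v. Define the (P,l)-multiplicity m_Q(P,l) via any affine transform T sending P onto the x_d-axis and l to the x_d-axis: write (T^{-1})^*Q = Σ_α x^{(α,0)} f_α(x_d), take all 'lowest' α (with f_α ≠ 0 and |α| minimal), and let m_Q(P,l) be the minimal multiplicity of the x_d-coordinate of T(P) as a root of f_α over lowest α. Then m_Q(P,l) is independent of the choice of T. -/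
open MvPolynomial

noncomputable def affPull {F : Type} [Field F] {d : ℕ}
    (M : Matrix (Fin d) (Fin d) F) (b : Fin d → F)
    (Q : MvPolynomial (Fin d) F) : MvPolynomial (Fin d) F :=
  MvPolynomial.aeval
    (fun i : Fin d => (∑ j, MvPolynomial.C (M i j) * MvPolynomial.X j) + MvPolynomial.C (b i)) Q

/-- Affine map `x ↦ M x + b` (the inverse of a transform `T`) sends the
`x_d`-axis onto the line `{a + t v}` and the point `(0, …, 0, p)` to `P`. -/
def SendsAxisTo {F : Type} [Field F] {n : ℕ}
    (M : Matrix (Fin (n + 1)) (Fin (n + 1)) F) (b : Fin (n + 1) → F)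
    (a v P : Fin (n + 1) → F) (p : F) : Prop :=
  IsUnit M.det ∧ (∃ t : F, b = a + t • v) ∧
    (∃ c : F, M.mulVec (Pi.single (Fin.last n) 1) = c • v) ∧
    M.mulVec (Pi.single (Fin.last n) p) + b = P

namespace Stmt14Aux
variable {F : Type} [Field F] {n : ℕ}

lemma degree_eq_sum (d : Fin n →₀ ℕ) : d.degree = ∑ i, d i := by
  rw [Finsupp.degree]
  exact Finset.sum_subset (Finset.subset_univ _)
    (by intro i _ h; simpa using Finsupp.notMem_support_iff.mp h)

lemma symm_apply (f : Fin n → ℕ) (i : Fin n) :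
    (Finsupp.equivFunOnFinite.symm f) i = f i := rfl

lemma finsupp_split (d : Fin (n+1) →₀ ℕ) :
    d = Finsupp.equivFunOnFinite.symm
      (Fin.snoc (fun i => d i.castSucc) (d (Fin.last n))) := by
  ext i
  rw [symm_apply]
  induction i using Fin.lastCases with
  | last => simp
  | cast i => simp

lemma coeff_sliceAt (Q : MvPolynomial (Fin (n+1)) F) (α : Fin n → ℕ) (k : ℕ) :
    (sliceAt Q α).coeff k
      = Q.coeff (Finsupp.equivFunOnFinite.symm (Fin.snoc α k)) := by
  rw [sliceAt, Polynomial.finset_sum_coeff]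
  simp only [Polynomial.coeff_C_mul, Polynomial.coeff_X_pow, mul_ite, mul_one, mul_zero]
  simp only [eq_comm (a := k)]
  rw [Finset.sum_ite_eq' (Finset.range (Q.totalDegree + 1)) k
    (fun j => Q.coeff (Finsupp.equivFunOnFinite.symm (Fin.snoc α j)))]
  split_ifs with h
  · rfl
  · symm
    apply coeff_eq_zero_of_totalDegree_lt
    have h1 : (Finsupp.equivFunOnFinite.symm (Fin.snoc α k : Fin (n+1) → ℕ)).degree
        = (∑ i, α i) + k := by
      rw [degree_eq_sum]
      simp only [symm_apply]
      rw [Fin.sum_univ_castSucc]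
      simp
    rw [← Finsupp.degree_apply, h1]
    simp only [Finset.mem_range] at h
    omega

noncomputable def Emap : MvPolynomial (Fin (n+1)) F →ₐ[F] MvPolynomial (Fin n) (Polynomial F) :=
  aeval (Fin.snoc (fun i => X i) (C Polynomial.X))

lemma Emap_monomial (d : Fin (n+1) →₀ ℕ) (r : F) :
    (Emap (monomial d r) : MvPolynomial (Fin n) (Polynomial F))
      = monomial (Finsupp.equivFunOnFinite.symm fun i => d i.castSucc)
          (Polynomial.C r * Polynomial.X ^ (d (Fin.last n))) := by
  rw [Emap, aeval_monomial, Finsupp.prod_fintype _ _ (fun i => pow_zero _), Fin.prod_univ_castSucc]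
  simp only [Fin.snoc_castSucc, Fin.snoc_last]
  rw [monomial_eq, Finsupp.prod_fintype _ _ (fun i => pow_zero _)]
  simp only [symm_apply]
  have halg : (algebraMap F (MvPolynomial (Fin n) (Polynomial F))) r = C (Polynomial.C r) := rfl
  rw [halg, map_mul, ← C_pow]
  ring

lemma split_eq_iff (d : Fin (n+1) →₀ ℕ) (α : Fin n → ℕ) (k : ℕ) :
    d = Finsupp.equivFunOnFinite.symm (Fin.snoc α k)
      ↔ ((fun i => d i.castSucc) = α ∧ d (Fin.last n) = k) := by
  constructor
  · rintro rfl
    constructor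
    · funext i
      rw [symm_apply, Fin.snoc_castSucc]
    · rw [symm_apply, Fin.snoc_last]
  · rintro ⟨h1, h2⟩
    rw [finsupp_split d, h1, h2]

lemma coeff_Emap (R : MvPolynomial (Fin (n+1)) F) (α : Fin n → ℕ) (k : ℕ) :
    ((Emap R).coeff (Finsupp.equivFunOnFinite.symm α)).coeff k
      = R.coeff (Finsupp.equivFunOnFinite.symm (Fin.snoc α k)) := by
  induction R using MvPolynomial.induction_on' with
  | add p q hp hq => simp [map_add, hp, hq]
  | monomial d r =>
    rw [Emap_monomial, MvPolynomial.coeff_monomial, MvPolynomial.coeff_monomial]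
    by_cases h : d = Finsupp.equivFunOnFinite.symm (Fin.snoc α k)
    · rw [if_pos h]
      obtain ⟨h1, h2⟩ := (split_eq_iff d α k).mp h
      rw [if_pos (by rw [h1]), h2]
      simp
    · rw [if_neg h]
      rcases Classical.em ((fun i => d i.castSucc) = α) with h1 | h1
      · rw [if_pos (by rw [h1])]
        have h2 : d (Fin.last n) ≠ k := fun h2 => h ((split_eq_iff d α k).mpr ⟨h1, h2⟩)
        simp [Polynomial.coeff_X_pow, Ne.symm h2]
      · rw [if_neg (fun hc => h1 (by
          funext i
          have := congrArg (fun f => f i) hc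
          simpa [symm_apply] using this))]
        simp

lemma Emap_ne_zero {R : MvPolynomial (Fin (n+1)) F} (hR : R ≠ 0) : (Emap R : MvPolynomial (Fin n) (Polynomial F)) ≠ 0 := by
  obtain ⟨d, hd⟩ : ∃ d, R.coeff d ≠ 0 := by
    by_contra hc
    push_neg at hc
    exact hR (MvPolynomial.ext _ _ (by simpa using hc))
  intro h0
  apply hd
  rw [finsupp_split d, ← coeff_Emap, h0]
  simp

def lowSet (G : MvPolynomial (Fin n) (Polynomial F)) : Set ℕ :=
  {k | ∃ d : Fin n →₀ ℕ, G.coeff d ≠ 0 ∧ d.degree = k}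

noncomputable def mlow (G : MvPolynomial (Fin n) (Polynomial F)) : ℕ := sInf (lowSet G)

def SetS (G : MvPolynomial (Fin n) (Polynomial F)) (p : F) : Set ℕ :=
  {m | ∃ d : Fin n →₀ ℕ, (G.coeff d ≠ 0 ∧ d.degree = mlow G)
        ∧ m = (G.coeff d).rootMultiplicity p}

noncomputable def amult (G : MvPolynomial (Fin n) (Polynomial F)) (p : F) : ℕ :=
  sInf (SetS G p)

lemma lowest_iff (G : MvPolynomial (Fin n) (Polynomial F)) (d : Fin n →₀ ℕ)
    (hd : G.coeff d ≠ 0) :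
    (∀ d' : Fin n →₀ ℕ, G.coeff d' ≠ 0 → d.degree ≤ d'.degree) ↔ d.degree = mlow G := by
  unfold mlow
  constructor
  · intro h
    refine le_antisymm ?_ (Nat.sInf_le ⟨d, hd, rfl⟩)
    obtain ⟨d₀, hd₀, hdeg₀⟩ := Nat.sInf_mem (⟨d.degree, d, hd, rfl⟩ : (lowSet G).Nonempty)
    rw [← hdeg₀]
    exact h d₀ hd₀
  · intro h d' h'
    rw [h]
    exact Nat.sInf_le ⟨d', h', rfl⟩

lemma slice_eq (R : MvPolynomial (Fin (n+1)) F) (α : Fin n → ℕ) :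
    sliceAt R α = (Emap R).coeff (Finsupp.equivFunOnFinite.symm α) := by
  apply Polynomial.ext
  intro k
  rw [coeff_sliceAt, coeff_Emap]

lemma axisMult_eq_amult (R : MvPolynomial (Fin (n+1)) F) (p : F) :
    axisMult R p = amult (Emap R) p := by
  unfold axisMult amult
  congr 1
  ext m
  constructor
  · rintro ⟨α, ⟨hα0, hαmin⟩, rfl⟩
    rw [slice_eq] at hα0 ⊢
    refine ⟨Finsupp.equivFunOnFinite.symm α, ⟨hα0, ?_⟩, rfl⟩
    rw [← lowest_iff _ _ hα0]
    intro d' h'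
    have := hαmin (⇑d') (by rw [slice_eq]; simpa using h')
    rw [degree_eq_sum, degree_eq_sum]
    simpa [symm_apply] using this
  · rintro ⟨d, ⟨hd0, hdeg⟩, rfl⟩
    refine ⟨⇑d, ⟨?_, ?_⟩, ?_⟩
    · rw [slice_eq]; simpa using hd0
    · intro α' hα'
      rw [slice_eq] at hα'
      have hmin := (lowest_iff _ _ hd0).mpr hdeg (Finsupp.equivFunOnFinite.symm α') hα'
      rw [degree_eq_sum, degree_eq_sum] at hmin
      simpa [symm_apply] using hmin
    · rw [slice_eq]; simp

lemma degree_add (x y : Fin n →₀ ℕ) : (x + y).degree = x.degree + y.degree := by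
  rw [degree_eq_sum, degree_eq_sum, degree_eq_sum, ← Finset.sum_add_distrib]
  simp [Finsupp.add_apply]

noncomputable def phiMap (U : MvPolynomial (Fin n) (Polynomial F)) :
    Polynomial F →+* MvPolynomial (Fin n) (Polynomial F) :=
  Polynomial.eval₂RingHom
    ((C : Polynomial F →+* MvPolynomial (Fin n) (Polynomial F)).comp
      (Polynomial.C : F →+* Polynomial F)) U

noncomputable def psiMap (g : Fin n → MvPolynomial (Fin n) (Polynomial F))
    (U : MvPolynomial (Fin n) (Polynomial F)) :
    MvPolynomial (Fin n) (Polynomial F) →+* MvPolynomial (Fin n) (Polynomial F) :=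
  eval₂Hom (phiMap U) g

lemma constantCoeff_phiMap (U : MvPolynomial (Fin n) (Polynomial F)) (q : Polynomial F) :
    constantCoeff (phiMap U q) = q.comp (constantCoeff U) := by
  show constantCoeff (Polynomial.eval₂ _ U q) = _
  rw [Polynomial.hom_eval₂]
  have : (constantCoeff.comp ((C : Polynomial F →+* MvPolynomial (Fin n) (Polynomial F)).comp
      (Polynomial.C : F →+* Polynomial F))) = (Polynomial.C : F →+* Polynomial F) := by
    ext a
    simp
  rw [this]
  rfl

lemma prod_pow_homog {g : Fin n → MvPolynomial (Fin n) (Polynomial F)}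
    (hg : ∀ i, (g i).IsHomogeneous 1) (d : Fin n →₀ ℕ) :
    (∏ i, g i ^ d i).IsHomogeneous d.degree := by
  rw [degree_eq_sum]
  exact IsHomogeneous.prod _ _ _ (fun i _ => by simpa using (hg i).pow (d i))

lemma psiMap_monomial (g : Fin n → MvPolynomial (Fin n) (Polynomial F)) (U) (d : Fin n →₀ ℕ)
    (q : Polynomial F) :
    psiMap g U (monomial d q) = phiMap U q * ∏ i, g i ^ d i := by
  show eval₂ _ _ _ = _
  rw [MvPolynomial.eval₂_monomial, Finsupp.prod_fintype _ _ (fun i => pow_zero _)]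

lemma coeff_term_lt {g : Fin n → MvPolynomial (Fin n) (Polynomial F)}
    (hg : ∀ i, (g i).IsHomogeneous 1) (U) (d : Fin n →₀ ℕ) (q : Polynomial F)
    (d' : Fin n →₀ ℕ) (hlt : d'.degree < d.degree) :
    coeff d' (phiMap U q * ∏ i, g i ^ d i) = 0 := by
  rw [MvPolynomial.coeff_mul]
  apply Finset.sum_eq_zero
  rintro ⟨x, y⟩ hxy
  rw [Finset.HasAntidiagonal.mem_antidiagonal] at hxy
  have hy : y.degree ≠ d.degree := by
    have : x.degree + y.degree = d'.degree := by rw [← degree_add, hxy]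
    omega
  rw [(prod_pow_homog hg d).coeff_eq_zero hy, mul_zero]

lemma coeff_term_eq {g : Fin n → MvPolynomial (Fin n) (Polynomial F)}
    (hg : ∀ i, (g i).IsHomogeneous 1) (U) (d : Fin n →₀ ℕ) (q : Polynomial F)
    (d' : Fin n →₀ ℕ) (heq : d'.degree = d.degree) :
    coeff d' (phiMap U q * ∏ i, g i ^ d i)
      = q.comp (constantCoeff U) * coeff d' (∏ i, g i ^ d i) := by
  rw [MvPolynomial.coeff_mul]
  rw [Finset.sum_eq_single (0, d')]
  · rw [← constantCoeff_phiMap]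
    rfl
  · rintro ⟨x, y⟩ hxy hne
    rw [Finset.HasAntidiagonal.mem_antidiagonal] at hxy
    by_cases hy : y.degree = d.degree
    · have hx : x.degree = 0 := by
        have : x.degree + y.degree = d'.degree := by rw [← degree_add, hxy]
        omega
      have hx0 : x = 0 := (Finsupp.degree_eq_zero_iff x).mp hx
      rw [hx0] at hxy
      simp only [zero_add] at hxy
      exact absurd (by rw [hx0, hxy]) hne
    · rw [(prod_pow_homog hg d).coeff_eq_zero hy, mul_zero]
  · intro hmem
    exact absurd (Finset.HasAntidiagonal.mem_antidiagonal.mpr (by simp)) hmem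

lemma lowSet_nonempty {G : MvPolynomial (Fin n) (Polynomial F)} (hG : G ≠ 0) :
    (lowSet G).Nonempty := by
  obtain ⟨d, hd⟩ := MvPolynomial.ne_zero_iff.mp hG
  exact ⟨d.degree, d, hd, rfl⟩

lemma mlow_le_of_coeff_ne {G : MvPolynomial (Fin n) (Polynomial F)} {d : Fin n →₀ ℕ}
    (hd : G.coeff d ≠ 0) : mlow G ≤ d.degree :=
  Nat.sInf_le ⟨d, hd, rfl⟩

lemma exists_lowest {G : MvPolynomial (Fin n) (Polynomial F)} (hG : G ≠ 0) :
    ∃ d : Fin n →₀ ℕ, G.coeff d ≠ 0 ∧ d.degree = mlow G := by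
  obtain ⟨d, hd, hdeg⟩ := Nat.sInf_mem (lowSet_nonempty hG)
  exact ⟨d, hd, hdeg⟩

lemma coeff_psiMap_lt {g : Fin n → MvPolynomial (Fin n) (Polynomial F)}
    (hg : ∀ i, (g i).IsHomogeneous 1) (U) (G : MvPolynomial (Fin n) (Polynomial F))
    (d' : Fin n →₀ ℕ) (hlt : d'.degree < mlow G) :
    coeff d' (psiMap g U G) = 0 := by
  conv_lhs => rw [G.as_sum]
  rw [map_sum]
  rw [MvPolynomial.coeff_sum]
  apply Finset.sum_eq_zero
  intro d hd
  rw [psiMap_monomial]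
  apply coeff_term_lt hg
  exact lt_of_lt_of_le hlt (mlow_le_of_coeff_ne (MvPolynomial.mem_support_iff.mp hd))

lemma mlow_le_psiMap {g : Fin n → MvPolynomial (Fin n) (Polynomial F)}
    (hg : ∀ i, (g i).IsHomogeneous 1) (U) {G : MvPolynomial (Fin n) (Polynomial F)}
    (hψG : psiMap g U G ≠ 0) : mlow G ≤ mlow (psiMap g U G) := by
  obtain ⟨d, hd, hdeg⟩ := exists_lowest hψG
  rw [← hdeg]
  by_contra hc
  exact hd (coeff_psiMap_lt hg U G d (by omega))

lemma coeff_psiMap_dvd {g : Fin n → MvPolynomial (Fin n) (Polynomial F)}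
    (hg : ∀ i, (g i).IsHomogeneous 1) (U) {G : MvPolynomial (Fin n) (Polynomial F)}
    {p p' : F} {e : ℕ}
    (hu : ∀ q : Polynomial F, (Polynomial.X - Polynomial.C p) ^ e ∣ q →
      (Polynomial.X - Polynomial.C p') ^ e ∣ q.comp (constantCoeff U))
    (hdvd : ∀ d : Fin n →₀ ℕ, G.coeff d ≠ 0 → d.degree = mlow G →
      (Polynomial.X - Polynomial.C p) ^ e ∣ G.coeff d)
    (d' : Fin n →₀ ℕ) (hdeg : d'.degree = mlow G) :
    (Polynomial.X - Polynomial.C p') ^ e ∣ coeff d' (psiMap g U G) := by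
  conv_rhs => rw [G.as_sum]
  rw [map_sum, MvPolynomial.coeff_sum]
  apply Finset.dvd_sum
  intro d hd
  rw [psiMap_monomial]
  have hcoeff : G.coeff d ≠ 0 := MvPolynomial.mem_support_iff.mp hd
  rcases lt_or_eq_of_le (mlow_le_of_coeff_ne hcoeff) with hlow | hlow
  · rw [coeff_term_lt hg U d _ d' (by omega)]
    exact dvd_zero _
  · rw [coeff_term_eq hg U d _ d' (by omega)]
    exact Dvd.dvd.mul_right (hu _ (hdvd d hcoeff hlow.symm)) _

lemma amult_le {g : Fin n → MvPolynomial (Fin n) (Polynomial F)}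
    (hg : ∀ i, (g i).IsHomogeneous 1) (U) {G : MvPolynomial (Fin n) (Polynomial F)}
    (hG : G ≠ 0) (hψG : psiMap g U G ≠ 0)
    (hmm : mlow (psiMap g U G) ≤ mlow G) {p p' : F}
    (hu : ∀ e : ℕ, ∀ q : Polynomial F, (Polynomial.X - Polynomial.C p) ^ e ∣ q →
      (Polynomial.X - Polynomial.C p') ^ e ∣ q.comp (constantCoeff U)) :
    amult G p ≤ amult (psiMap g U G) p' := by
  set e := amult G p with he
  have hdvd : ∀ d : Fin n →₀ ℕ, G.coeff d ≠ 0 → d.degree = mlow G →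
      (Polynomial.X - Polynomial.C p) ^ e ∣ G.coeff d := by
    intro d hd hdeg
    have hmem : (G.coeff d).rootMultiplicity p ∈ SetS G p := ⟨d, ⟨hd, hdeg⟩, rfl⟩
    have hle : e ≤ (G.coeff d).rootMultiplicity p := Nat.sInf_le hmem
    exact dvd_trans (pow_dvd_pow _ hle) ((G.coeff d).pow_rootMultiplicity_dvd p)
  -- the inf over SetS (psiMap g U G) p' is attained
  have hne : (SetS (psiMap g U G) p').Nonempty := by
    obtain ⟨d, hd, hdeg⟩ := exists_lowest hψG
    exact ⟨_, d, ⟨hd, hdeg⟩, rfl⟩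
  obtain ⟨d₀, ⟨hd₀, hdeg₀⟩, hval⟩ := Nat.sInf_mem hne
  show e ≤ sInf (SetS (psiMap g U G) p')
  rw [← he] at *
  rw [hval]
  have hmlow : mlow (psiMap g U G) = mlow G :=
    le_antisymm hmm (mlow_le_psiMap hg U hψG)
  have hdvd' := coeff_psiMap_dvd hg U (hu e) hdvd d₀ (by rw [hdeg₀, hmlow])
  exact (Polynomial.le_rootMultiplicity_iff hd₀).mpr hdvd'

noncomputable def gOf (A : Matrix (Fin (n+1)) (Fin (n+1)) F) :
    Fin n → MvPolynomial (Fin n) (Polynomial F) :=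
  fun i => ∑ j, C (Polynomial.C (A i.castSucc j.castSucc)) * X j

noncomputable def UOf (A : Matrix (Fin (n+1)) (Fin (n+1)) F) (c : Fin (n+1) → F) :
    MvPolynomial (Fin n) (Polynomial F) :=
  (∑ j, C (Polynomial.C (A (Fin.last n) j.castSucc)) * X j)
    + C (Polynomial.C (A (Fin.last n) (Fin.last n)) * Polynomial.X
          + Polynomial.C (c (Fin.last n)))

lemma gOf_homog (A : Matrix (Fin (n+1)) (Fin (n+1)) F) (i : Fin n) :
    ((gOf A i : MvPolynomial (Fin n) (Polynomial F))).IsHomogeneous 1 :=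
  IsHomogeneous.sum _ _ _ (fun j _ => (isHomogeneous_X _ j).C_mul _)

lemma constantCoeff_UOf (A : Matrix (Fin (n+1)) (Fin (n+1)) F) (c : Fin (n+1) → F) :
    constantCoeff (UOf A c)
      = Polynomial.C (A (Fin.last n) (Fin.last n)) * Polynomial.X
          + Polynomial.C (c (Fin.last n)) := by
  rw [UOf, map_add, map_sum]
  simp [constantCoeff_X, constantCoeff_C]

lemma Emap_affPull (A : Matrix (Fin (n+1)) (Fin (n+1)) F) (c : Fin (n+1) → F)
    (hA : ∀ i : Fin n, A i.castSucc (Fin.last n) = 0)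
    (hc : ∀ i : Fin n, c i.castSucc = 0)
    (R : MvPolynomial (Fin (n+1)) F) :
    Emap (affPull A c R) = psiMap (gOf A) (UOf A c) (Emap R) := by
  have key : ((Emap (F := F) (n := n)).toRingHom.comp
        (aeval (fun i : Fin (n+1) =>
          (∑ j, C (A i j) * X j) + C (c i))).toRingHom)
      = (psiMap (gOf A) (UOf A c)).comp (Emap (F := F) (n := n)).toRingHom := by
    apply MvPolynomial.ringHom_ext
    · intro r
      simp only [RingHom.comp_apply, AlgHom.toRingHom_eq_coe, RingHom.coe_coe]
      rw [aeval_C]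
      have h1 : (algebraMap F (MvPolynomial (Fin (n+1)) F)) r = C r := rfl
      rw [h1]
      have h2 : (Emap (C r) : MvPolynomial (Fin n) (Polynomial F)) = C (Polynomial.C r) := by
        rw [Emap, aeval_C]; rfl
      rw [h2]
      rw [psiMap, eval₂Hom_C]
      show C (Polynomial.C r) = Polynomial.eval₂ _ _ _
      rw [Polynomial.eval₂_C]
      rfl
    · intro i
      simp only [RingHom.comp_apply, AlgHom.toRingHom_eq_coe, RingHom.coe_coe]
      rw [aeval_X]
      rw [map_add, map_sum]
      have hEX : ∀ j : Fin (n+1), (Emap (X j) : MvPolynomial (Fin n) (Polynomial F))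
          = (Fin.snoc (fun i => (X i : MvPolynomial (Fin n) (Polynomial F)))
              (C Polynomial.X) : Fin (n+1) → MvPolynomial (Fin n) (Polynomial F)) j := by
        intro j; rw [Emap, aeval_X]
      have hEC : ∀ x : F, (Emap (C x) : MvPolynomial (Fin n) (Polynomial F))
          = C (Polynomial.C x) := by
        intro x; rw [Emap, aeval_C]; rfl
      simp only [map_mul, hEX, hEC]
      induction i using Fin.lastCases with
      | last =>
        rw [Fin.snoc_last, psiMap, eval₂Hom_C]
        show _ = Polynomial.eval₂ _ _ _
        rw [Polynomial.eval₂_X]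
        rw [Fin.sum_univ_castSucc]
        simp only [Fin.snoc_castSucc, Fin.snoc_last]
        rw [UOf]
        rw [map_add, map_mul]
        ring
      | cast i =>
        rw [Fin.snoc_castSucc, psiMap, eval₂Hom_X']
        rw [Fin.sum_univ_castSucc]
        simp only [Fin.snoc_castSucc, Fin.snoc_last]
        rw [hA i, hc i]
        simp [gOf]
  have := RingHom.congr_fun key R
  simpa [affPull] using this

lemma comp_dvd {lam cd p p' : F} (hp : p = lam * p' + cd) (e : ℕ) (q : Polynomial F)
    (hq : (Polynomial.X - Polynomial.C p) ^ e ∣ q) :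
    (Polynomial.X - Polynomial.C p') ^ e
      ∣ q.comp (Polynomial.C lam * Polynomial.X + Polynomial.C cd) := by
  obtain ⟨h, rfl⟩ := hq
  rw [Polynomial.mul_comp, Polynomial.pow_comp, Polynomial.sub_comp,
    Polynomial.X_comp, Polynomial.C_comp]
  have hkey : Polynomial.C lam * Polynomial.X + Polynomial.C cd - Polynomial.C p
      = Polynomial.C lam * (Polynomial.X - Polynomial.C p') := by
    rw [hp, map_add, map_mul]
    ring
  rw [hkey, mul_pow]
  exact ⟨Polynomial.C lam ^ e * h.comp _, by ring⟩

lemma affPull_affPull {d : ℕ} (M A : Matrix (Fin d) (Fin d) F) (b c : Fin d → F)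
    (Q : MvPolynomial (Fin d) F) :
    affPull A c (affPull M b Q) = affPull (M * A) (M.mulVec c + b) Q := by
  rw [affPull, affPull, affPull]
  rw [← AlgHom.comp_apply, comp_aeval]
  have hfun : (fun i : Fin d => (aeval fun i : Fin d => (∑ j, C (A i j) * X j) + C (c i))
        ((∑ j, C (M i j) * X j) + C (b i)))
      = fun i : Fin d => (∑ j, C ((M * A) i j) * X j) + C ((M.mulVec c + b) i) := by
    funext i
    rw [map_add, map_sum, aeval_C]
    have halg : ∀ x : F, (algebraMap F (MvPolynomial (Fin d) F)) x = C x := fun _ => rfl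
    simp only [map_mul, aeval_C, aeval_X, halg]
    simp only [Matrix.mulVec, dotProduct, Pi.add_apply]
    simp only [Matrix.mul_apply, dotProduct, mul_add, Finset.mul_sum, add_mul,
      Finset.sum_add_distrib, map_sum, map_mul, Finset.sum_mul]
    rw [Finset.sum_comm]
    ring_nf
    rw [add_assoc]
    congr 1
    rw [map_add, map_sum]
    simp only [map_mul]
  rw [hfun]

lemma affPull_one_zero {d : ℕ} (Q : MvPolynomial (Fin d) F) :
    affPull (1 : Matrix (Fin d) (Fin d) F) (0 : Fin d → F) Q = Q := by
  rw [affPull]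
  have : (fun i : Fin d => (∑ j, C ((1 : Matrix (Fin d) (Fin d) F) i j) * X j) + C ((0 : Fin d → F) i))
      = fun i : Fin d => (X i : MvPolynomial (Fin d) F) := by
    funext i
    rw [Pi.zero_apply, map_zero, add_zero]
    simp [Matrix.one_apply, apply_ite C, ite_mul]
  rw [this]
  simp [aeval_X_left]

lemma affPull_left_inv {d : ℕ} (A : Matrix (Fin d) (Fin d) F) (c : Fin d → F)
    (hA : IsUnit A.det) (R : MvPolynomial (Fin d) F) :
    affPull A⁻¹ (-(A⁻¹.mulVec c)) (affPull A c R) = R := by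
  rw [affPull_affPull]
  have h1 : A * A⁻¹ = 1 := Matrix.mul_nonsing_inv A hA
  have h2 : A.mulVec (-(A⁻¹.mulVec c)) + c = 0 := by
    rw [Matrix.mulVec_neg, Matrix.mulVec_mulVec, h1, Matrix.one_mulVec]
    simp
  rw [h1, h2, affPull_one_zero]

lemma affPull_ne_zero {d : ℕ} (A : Matrix (Fin d) (Fin d) F) (c : Fin d → F)
    (hA : IsUnit A.det) {R : MvPolynomial (Fin d) F} (hR : R ≠ 0) :
    affPull A c R ≠ 0 := by
  intro h0
  apply hR
  rw [← affPull_left_inv A c hA R, h0, affPull, map_zero]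

lemma mulVec_inj {d : ℕ} {A : Matrix (Fin d) (Fin d) F} (hA : IsUnit A.det)
    {x y : Fin d → F} (h : A.mulVec x = A.mulVec y) : x = y := by
  have := congrArg (A⁻¹.mulVec ·) h
  simpa [Matrix.mulVec_mulVec, Matrix.nonsing_inv_mul A hA, Matrix.one_mulVec] using this

lemma smul_single (x : F) :
    x • (Pi.single (Fin.last n) 1 : Fin (n+1) → F) = Pi.single (Fin.last n) x := by
  funext i
  simp [Pi.single_apply, mul_ite]

lemma neg_single (x : F) :
    -(Pi.single (Fin.last n) x : Fin (n+1) → F) = Pi.single (Fin.last n) (-x) := by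
  funext i
  simp [Pi.single_apply, apply_ite Neg.neg]
  split <;> simp

lemma col_entries {A : Matrix (Fin (n+1)) (Fin (n+1)) F} {x : F}
    (h : A.mulVec (Pi.single (Fin.last n) 1) = x • (Pi.single (Fin.last n) 1 : Fin (n+1) → F)) :
    (∀ i : Fin n, A i.castSucc (Fin.last n) = 0) ∧ A (Fin.last n) (Fin.last n) = x := by
  rw [Matrix.mulVec_single] at h
  constructor
  · intro i
    have := congrFun h i.castSucc
    simpa [Pi.single_apply, (Fin.castSucc_lt_last i).ne] using this
  · have := congrFun h (Fin.last n)
    simpa using this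

end Stmt14Aux

open Stmt14Aux

/-- The `(P, l)`-multiplicity of `Q` is independent of the choice of affine
transform `T` sending `P` into the `x_d`-axis and `l` to the `x_d`-axis. -/
theorem stmt14 {F : Type} [Field F] {n : ℕ} (hn : 1 ≤ n)
    (Q : MvPolynomial (Fin (n + 1)) F) (hQ : Q ≠ 0)
    (a v P : Fin (n + 1) → F) (hv : v ≠ 0)
    (M M' : Matrix (Fin (n + 1)) (Fin (n + 1)) F) (b b' : Fin (n + 1) → F) (p p' : F)
    (h : SendsAxisTo M b a v P p) (h' : SendsAxisTo M' b' a v P p') :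
    axisMult (affPull M b Q) p = axisMult (affPull M' b' Q) p' := by
  obtain ⟨hdet, ⟨t, hb⟩, ⟨c₀, hMe⟩, hP⟩ := h
  obtain ⟨hdet', ⟨t', hb'⟩, ⟨c₀', hMe'⟩, hP'⟩ := h'
  have hsingle_ne : (Pi.single (Fin.last n) 1 : Fin (n+1) → F) ≠ 0 := by
    intro hz
    have := congrFun hz (Fin.last n)
    simp at this
  have hc₀ : c₀ ≠ 0 := by
    rintro rfl
    rw [zero_smul] at hMe
    exact hsingle_ne (mulVec_inj hdet (by rw [hMe, Matrix.mulVec_zero]))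
  set A := M⁻¹ * M' with hAdef
  set ccc := M⁻¹.mulVec (b' - b) with hcccdef
  set lam := c₀' * c₀⁻¹ with hlamdef
  set cd := (t' - t) * c₀⁻¹ with hcddef
  have hMinv : M * M⁻¹ = 1 := Matrix.mul_nonsing_inv M hdet
  have hMinv' : M⁻¹ * M = 1 := Matrix.nonsing_inv_mul M hdet
  have f1 : M * A = M' := by rw [hAdef, ← Matrix.mul_assoc, hMinv, Matrix.one_mul]
  have f2 : M.mulVec ccc + b = b' := by
    rw [hcccdef, Matrix.mulVec_mulVec, hMinv, Matrix.one_mulVec, sub_add_cancel]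
  have f4 : IsUnit A.det := by
    rw [hAdef, Matrix.det_mul]
    exact (Matrix.isUnit_nonsing_inv_det M hdet).mul hdet'
  have hMinvVec : M⁻¹.mulVec v = c₀⁻¹ • (Pi.single (Fin.last n) 1 : Fin (n+1) → F) := by
    have hveq : v = c₀⁻¹ • M.mulVec (Pi.single (Fin.last n) 1) := by
      rw [hMe, smul_smul, inv_mul_cancel₀ hc₀, one_smul]
    rw [hveq, Matrix.mulVec_smul, Matrix.mulVec_mulVec, hMinv', Matrix.one_mulVec]
  have f5 : A.mulVec (Pi.single (Fin.last n) 1)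
      = lam • (Pi.single (Fin.last n) 1 : Fin (n+1) → F) := by
    rw [hAdef, ← Matrix.mulVec_mulVec, hMe', Matrix.mulVec_smul, hMinvVec, smul_smul]
  obtain ⟨hAcol, hAll⟩ := col_entries f5
  have hlam : lam ≠ 0 := by
    intro h0
    rw [h0, zero_smul] at f5
    exact hsingle_ne (mulVec_inj f4 (by rw [f5, Matrix.mulVec_zero]))
  have f7 : ccc = Pi.single (Fin.last n) cd := by
    have hbb : b' - b = (t' - t) • v := by
      rw [hb, hb']
      funext i
      simp only [Pi.add_apply, Pi.sub_apply, Pi.smul_apply, smul_eq_mul]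
      ring
    rw [hcccdef, hbb, Matrix.mulVec_smul, hMinvVec, smul_smul, smul_single]
  have f8 : A.mulVec (Pi.single (Fin.last n) p') + ccc = Pi.single (Fin.last n) p := by
    apply mulVec_inj hdet
    rw [Matrix.mulVec_add, Matrix.mulVec_mulVec, f1]
    have h2 : M.mulVec ccc = b' - b := by rw [← f2]; abel
    have h3 : M'.mulVec (Pi.single (Fin.last n) p') = P - b' := by rw [← hP']; abel
    have h4 : M.mulVec (Pi.single (Fin.last n) p) = P - b := by rw [← hP]; abel
    rw [h2, h3, h4]
    abel
  have f9 : lam * p' + cd = p := by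
    have hf := congrFun f8 (Fin.last n)
    rw [f7] at hf
    rw [Matrix.mulVec_single] at hf
    rw [mul_comm]
    simpa [hAll] using hf
  -- inverse transform data
  set A2 := A⁻¹ with hA2def
  set c2 := -(A⁻¹.mulVec ccc) with hc2def
  have hAinv : A⁻¹ * A = 1 := Matrix.nonsing_inv_mul A f4
  have f4' : IsUnit A2.det := Matrix.isUnit_nonsing_inv_det A f4
  have g2 : A2.mulVec (Pi.single (Fin.last n) 1)
      = lam⁻¹ • (Pi.single (Fin.last n) 1 : Fin (n+1) → F) := by
    have h1 : A2.mulVec (A.mulVec (Pi.single (Fin.last n) 1)) = Pi.single (Fin.last n) 1 := by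
      rw [Matrix.mulVec_mulVec, hA2def, hAinv, Matrix.one_mulVec]
    rw [f5, Matrix.mulVec_smul] at h1
    calc A2.mulVec (Pi.single (Fin.last n) 1)
        = lam⁻¹ • (lam • A2.mulVec (Pi.single (Fin.last n) 1)) := by
          rw [smul_smul, inv_mul_cancel₀ hlam, one_smul]
      _ = lam⁻¹ • (Pi.single (Fin.last n) 1 : Fin (n+1) → F) := by rw [h1]
  obtain ⟨hA2col, hA2ll⟩ := col_entries g2
  have g3 : c2 = Pi.single (Fin.last n) (-(cd * lam⁻¹)) := by
    rw [hc2def, f7, ← smul_single cd, Matrix.mulVec_smul, ← hA2def, g2, smul_smul,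
      smul_single, neg_single]
  have g4 : lam⁻¹ * p + (-(cd * lam⁻¹)) = p' := by
    rw [← f9]
    field_simp
    ring
  -- polynomial side
  set R := affPull M b Q with hRdef
  set R' := affPull M' b' Q with hR'def
  have f3 : affPull A ccc R = R' := by rw [hRdef, affPull_affPull, f1, f2]
  have g1 : affPull A2 c2 R' = R := by rw [← f3, hA2def, hc2def, affPull_left_inv A ccc f4 R]
  have hR : R ≠ 0 := affPull_ne_zero M b hdet hQ
  have hR' : R' ≠ 0 := affPull_ne_zero M' b' hdet' hQ
  have hG : (Emap R : MvPolynomial (Fin n) (Polynomial F)) ≠ 0 := Emap_ne_zero hR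
  have hG' : (Emap R' : MvPolynomial (Fin n) (Polynomial F)) ≠ 0 := Emap_ne_zero hR'
  have hcc0 : ∀ i : Fin n, ccc i.castSucc = 0 := by
    intro i
    rw [f7]
    exact Pi.single_eq_of_ne (Fin.castSucc_lt_last i).ne _
  have hc20 : ∀ i : Fin n, c2 i.castSucc = 0 := by
    intro i
    rw [g3]
    exact Pi.single_eq_of_ne (Fin.castSucc_lt_last i).ne _
  have hint1 : (Emap R' : MvPolynomial (Fin n) (Polynomial F))
      = psiMap (gOf A) (UOf A ccc) (Emap R) := by
    rw [← f3]
    exact Emap_affPull A ccc hAcol hcc0 R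
  have hint2 : (Emap R : MvPolynomial (Fin n) (Polynomial F))
      = psiMap (gOf A2) (UOf A2 c2) (Emap R') := by
    rw [← g1]
    exact Emap_affPull A2 c2 hA2col hc20 R'
  have hm1 : mlow (Emap R : MvPolynomial (Fin n) (Polynomial F)) ≤ mlow (Emap R') := by
    rw [hint1]
    exact mlow_le_psiMap (gOf_homog A) _ (by rw [← hint1]; exact hG')
  have hm2 : mlow (Emap R' : MvPolynomial (Fin n) (Polynomial F)) ≤ mlow (Emap R) := by
    rw [hint2]
    exact mlow_le_psiMap (gOf_homog A2) _ (by rw [← hint2]; exact hG)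
  have hU1 : constantCoeff (UOf A ccc)
      = Polynomial.C lam * Polynomial.X + Polynomial.C cd := by
    rw [constantCoeff_UOf, hAll, f7, Pi.single_eq_same]
  have hU2 : constantCoeff (UOf A2 c2)
      = Polynomial.C lam⁻¹ * Polynomial.X + Polynomial.C (-(cd * lam⁻¹)) := by
    rw [constantCoeff_UOf, hA2ll, g3, Pi.single_eq_same]
  have le1 : amult (Emap R : MvPolynomial (Fin n) (Polynomial F)) p ≤ amult (Emap R') p' := by
    rw [hint1]
    refine amult_le (gOf_homog A) _ hG (by rw [← hint1]; exact hG')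
      (by rw [← hint1]; exact hm2) ?_
    intro e q hq
    rw [hU1]
    exact comp_dvd f9.symm e q hq
  have le2 : amult (Emap R' : MvPolynomial (Fin n) (Polynomial F)) p' ≤ amult (Emap R) p := by
    rw [hint2]
    refine amult_le (gOf_homog A2) _ hG' (by rw [← hint2]; exact hG)
      (by rw [← hint2]; exact hm1) ?_
    intro e q hq
    rw [hU2]
    exact comp_dvd g4.symm e q hq
  rw [axisMult_eq_amult, axisMult_eq_amult]
  exact le_antisymm le1 le2
end
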